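/- arXiv:2506.16140 — 3 statements merged into one kernel-verified Lean document; each statement's English description precedes it below -/
import Mathlib

section
/- Let ℓ ≥ 2 and r > k ≥ 2 be integers with ℓ ≤ r + 1. For sufficiently large n, the maximum number of hyperedges in an n-vertex r-uniform hypergraph containing no Berge copy of S_ℓ ∪ M_{k-1} equals ⌊n(ℓ-1)/r⌋. -/
open Finset

/-- A Berge copy of the graph `F` in the hypergraph `H`: an injective embedding of the
vertices of `F` together with an injective assignment of distinct hyperedges to the
edges of `F`, each hyperedge containing (the images of) both endpoints of its edge. -/
def IsBergeCopy {α V : Type*} (F : SimpleGraph α) (H : Finset (Finset V)) : Prop :=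
  ∃ (f : α → V) (φ : Sym2 α → Finset V),
    Function.Injective f ∧ Set.InjOn φ F.edgeSet ∧
    ∀ e ∈ F.edgeSet, φ e ∈ H ∧ ∀ x ∈ e, f x ∈ φ e

/-- The Turán number `ex_r(n, Berge-F)`: the maximum number of hyperedges in an
`n`-vertex `r`-uniform hypergraph with no Berge copy of `F`. -/
noncomputable def exBerge {α : Type*} (r n : ℕ) (F : SimpleGraph α) : ℕ :=
  sSup {m | ∃ H : Finset (Finset (Fin n)),
    (∀ e ∈ H, e.card = r) ∧ ¬ IsBergeCopy F H ∧ H.card = m}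

/-- The path with `ℓ` edges, on `ℓ+1` vertices. -/
def pathG (ℓ : ℕ) : SimpleGraph (Fin (ℓ + 1)) :=
  SimpleGraph.fromRel (fun x y => (x : ℕ) + 1 = (y : ℕ))

/-- `c` vertex-disjoint stars, each with `ℓ` edges (centers are the vertices `(i, 0)`). -/
def starsG (c ℓ : ℕ) : SimpleGraph (Fin c × Fin (ℓ + 1)) :=
  SimpleGraph.fromRel (fun x y => x.1 = y.1 ∧ x.2 = 0)

/-- A matching with `t` edges. -/
def matchingG (t : ℕ) : SimpleGraph (Fin t × Fin 2) :=
  SimpleGraph.fromRel (fun x y => x.1 = y.1)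

/-- Vertex-disjoint union of `k` paths, the `i`-th having `ℓ i` edges. -/
def pathsG (k : ℕ) (ℓ : Fin k → ℕ) : SimpleGraph (Σ i : Fin k, Fin (ℓ i + 1)) :=
  SimpleGraph.fromRel (fun x y => x.1 = y.1 ∧ (x.2 : ℕ) + 1 = (y.2 : ℕ))

/-- A hypergraph is connected if every two vertices are joined by a walk of hyperedges
(equivalently, lie on a common Berge path). -/
def HyperConnected {V : Type*} (H : Finset (Finset V)) : Prop :=
  ∀ u v : V, Relation.ReflTransGen (fun a b => ∃ e ∈ H, a ∈ e ∧ b ∈ e) u v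

/-- The connected Turán number `ex^con_r(n, Berge-F)`. -/
noncomputable def exConBerge {α : Type*} (r n : ℕ) (F : SimpleGraph α) : ℕ :=
  sSup {m | ∃ H : Finset (Finset (Fin n)),
    (∀ e ∈ H, e.card = r) ∧ HyperConnected H ∧ ¬ IsBergeCopy F H ∧ H.card = m}


namespace BergeAux

def consE (n r p j : ℕ) : Finset ℕ := (range r).image (fun s => (j*r + j/p + s) % n)

lemma mem_consE {n r p j x : ℕ} : x ∈ consE n r p j ↔ ∃ s < r, (j*r + j/p + s) % n = x := by
  simp only [consE, Finset.mem_image, Finset.mem_range]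

lemma tag_lt {n r q i c B v s w : ℕ} (hv : v < n) (hq : q < n)
    (hic : i < c) (hcB : c*r ≤ n*B) (hs : s < r) (hw : i*r + q + s = n*w + v) :
    (if q ≤ v then w else w - 1) < B := by
  have h2 : i*r + s + 1 ≤ n*B := by
    calc i*r + s + 1 ≤ i*r + r := by omega
    _ = (i+1)*r := by ring
    _ ≤ c*r := Nat.mul_le_mul_right r (by omega)
    _ ≤ n*B := hcB
  split_ifs with hqv
  · have h3 : n*w < n*B := by omega
    exact Nat.lt_of_mul_lt_mul_left h3
  · have hw1 : 1 ≤ w := by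
      rcases Nat.eq_zero_or_pos w with h0 | h0
      · exfalso; rw [h0, Nat.mul_zero, Nat.zero_add] at hw; omega
      · exact h0
    have h3 : n*w < n*B + n := by omega
    have h4 : n*w < n*(B+1) := by
      have : n*(B+1) = n*B + n := by ring
      omega
    have := Nat.lt_of_mul_lt_mul_left h4
    omega

lemma w_pos {n r q i v s w : ℕ} (hvq : v < q) (hw : i*r + q + s = n*w + v) : 1 ≤ w := by
  rcases Nat.eq_zero_or_pos w with h0 | h0
  · exfalso; rw [h0, Nat.mul_zero, Nat.zero_add] at hw; omega
  · exact h0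

lemma consE_deg {n r d m : ℕ} (hn : 0 < n) (hr : 0 < r) (hdr : d ≤ r)
    (hm : m * r ≤ n * d) (v : ℕ) (hv : v < n) :
    ((range m).filter (fun j => v ∈ consE n r (n / n.gcd r) j)).card ≤ d := by
  classical
  set g := n.gcd r with hgdef
  have hgn : g ∣ n := Nat.gcd_dvd_left n r
  have hgr : g ∣ r := Nat.gcd_dvd_right n r
  have hg : 0 < g := Nat.gcd_pos_of_pos_left r hn
  set p := n / g with hpdef
  have hp : 0 < p := Nat.div_pos (Nat.le_of_dvd hn hgn) hg
  set r' := r / g with hr'def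
  have hpr : p * r = n * r' := by
    obtain ⟨a, ha⟩ := hgn
    obtain ⟨b, hb⟩ := hgr
    have hpa : p = a := by rw [hpdef, ha, Nat.mul_div_cancel_left a hg]
    have hrb : r' = b := by rw [hr'def, hb, Nat.mul_div_cancel_left b hg]
    rw [hpa, hrb, ha, hb]; ring
  have hmn : m ≤ n := by
    have : m * r ≤ n * r := le_trans hm (Nat.mul_le_mul_left n hdr)
    exact Nat.le_of_mul_le_mul_right this hr
  set T := (range m).filter (fun j => v ∈ consE n r p j) with hT
  have hsel : ∀ j ∈ T, ∃ s, s < r ∧ (j*r + j/p + s) % n = v := by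
    intro j hj
    rw [hT, Finset.mem_filter, mem_consE] at hj
    exact hj.2
  choose! sfun hslt hseq using hsel
  set Q := m / p with hQdef
  have hpQm : p*Q ≤ m := by rw [mul_comm]; exact Nat.div_mul_le_self m p
  have hQr' : Q * r' ≤ d := by
    have h1 : (p*Q) * r ≤ m * r := Nat.mul_le_mul_right r hpQm
    have h2 : (p*Q) * r = n * (Q * r') := by
      calc (p*Q) * r = Q * (p * r) := by ring
      _ = Q * (n * r') := by rw [hpr]
      _ = n * (Q * r') := by ring
    have h3 : n * (Q * r') ≤ n * d := by omega
    exact Nat.le_of_mul_le_mul_left h3 hn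
  set w : ℕ → ℕ := fun j => ((j%p)*r + j/p + sfun j)/n with hwdef
  have hAeq : ∀ j ∈ T, (j%p)*r + j/p + sfun j = n * w j + v := by
    intro j hj
    have hmod : ((j%p)*r + j/p + sfun j) % n = v := by
      have h0 := hseq j hj
      have hj2 : j = p*(j/p) + j%p := (Nat.div_add_mod j p).symm
      have h1 : j*r + j/p + sfun j = ((j%p)*r + j/p + sfun j) + ((j/p)*r')*n := by
        calc j*r + j/p + sfun j = (p*(j/p) + j%p)*r + j/p + sfun j := by rw [← hj2]
        _ = ((j%p)*r + j/p + sfun j) + (j/p)*(p*r) := by ring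
        _ = ((j%p)*r + j/p + sfun j) + ((j/p)*r')*n := by rw [hpr]; ring
      rw [h1, Nat.add_mul_mod_self_right] at h0
      exact h0
    have : n * (((j%p)*r + j/p + sfun j)/n) + (((j%p)*r + j/p + sfun j)) % n
        = (j%p)*r + j/p + sfun j := Nat.div_add_mod _ n
    rw [hmod] at this
    exact this.symm
  set tag : ℕ → ℕ := fun j => if j/p ≤ v then w j else w j - 1 with htagdef
  set ψ : ℕ → ℕ := fun j => (j/p)*r' + tag j with hψdef
  have htageq : ∀ j, tag j = if j/p ≤ v then w j else w j - 1 := fun j => rfl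
  have hψeq : ∀ j, ψ j = (j/p)*r' + tag j := fun j => rfl
  have hjfacts : ∀ j ∈ T, j < m := by
    intro j hj; rw [hT, Finset.mem_filter, Finset.mem_range] at hj; exact hj.1
  have hqn : ∀ j ∈ T, j/p < n :=
    fun j hj => lt_of_le_of_lt (Nat.div_le_self j p) (lt_of_lt_of_le (hjfacts j hj) hmn)
  have htagfull : ∀ j ∈ T, j/p < Q → tag j < r' := by
    intro j hj _
    rw [htageq]
    exact tag_lt hv (hqn j hj) (Nat.mod_lt j hp) (le_of_eq hpr) (hslt j hj) (hAeq j hj)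
  have htagpart : ∀ j ∈ T, j/p = Q → tag j < d - Q * r' := by
    intro j hj hpart
    have hjm := hjfacts j hj
    have hdm : j = p*Q + j%p := by rw [← hpart]; exact (Nat.div_add_mod j p).symm
    have hic : j % p < m - p*Q := by omega
    have hcB : (m - p*Q) * r ≤ n * (d - Q*r') := by
      have h2 : (p*Q) * r = n * (Q * r') := by
        calc (p*Q) * r = Q * (p * r) := by ring
        _ = Q * (n * r') := by rw [hpr]
        _ = n * (Q * r') := by ring
      have h3 : (m - p*Q) * r + (p*Q) * r = m * r := by
        have hc : (m - p*Q) + p*Q = m := by omega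
        calc (m - p*Q) * r + (p*Q) * r = ((m - p*Q) + p*Q) * r := by ring
        _ = m * r := by rw [hc]
      have h4 : n * (d - Q*r') + n * (Q*r') = n * d := by
        have hc : (d - Q*r') + Q*r' = d := by omega
        calc n * (d - Q*r') + n * (Q*r') = n * ((d - Q*r') + Q*r') := by ring
        _ = n * d := by rw [hc]
      omega
    rw [htageq]
    exact tag_lt hv (hqn j hj) hic hcB (hslt j hj) (hAeq j hj)
  have hqQ : ∀ j ∈ T, j/p ≤ Q := fun j hj => Nat.div_le_div_right (le_of_lt (hjfacts j hj))
  have hψlt : ∀ j ∈ T, ψ j < d := by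
    intro j hj
    rw [hψeq]
    rcases lt_or_eq_of_le (hqQ j hj) with hfull | hpart
    · have ht := htagfull j hj hfull
      have h3 : (j/p)*r' + r' ≤ Q*r' := by
        calc (j/p)*r' + r' = (j/p + 1)*r' := by ring
        _ ≤ Q*r' := Nat.mul_le_mul_right r' (by omega)
      omega
    · have ht := htagpart j hj hpart
      rw [hpart]
      omega
  have hψinj : ∀ j ∈ T, ∀ j' ∈ T, ψ j = ψ j' → j = j' := by
    intro j hj j' hj' heq
    rw [hψeq, hψeq] at heq
    rcases lt_trichotomy (j/p) (j'/p) with hlt | heqq | hgt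
    · exfalso
      have ht := htagfull j hj (lt_of_lt_of_le hlt (hqQ j' hj'))
      have h3 : (j/p)*r' + r' ≤ (j'/p)*r' := by
        calc (j/p)*r' + r' = (j/p + 1)*r' := by ring
        _ ≤ (j'/p)*r' := Nat.mul_le_mul_right r' (by omega)
      omega
    · rw [heqq] at heq
      have htag : tag j = tag j' := by omega
      have hweq : w j = w j' := by
        rw [htageq, htageq, heqq] at htag
        split_ifs at htag with hqv
        · exact htag
        · push_neg at hqv
          have h1 : 1 ≤ w j := w_pos (q := j/p) (by omega) (hAeq j hj)
          have h2 : 1 ≤ w j' := w_pos (q := j'/p) hqv (hAeq j' hj')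
          omega
      have hAe : (j%p)*r + j/p + sfun j = (j'%p)*r + j'/p + sfun j' := by
        have e1 := hAeq j hj
        have e2 := hAeq j' hj'
        rw [hweq] at e1
        omega
      have hieq : j % p = j' % p := by
        have hs1 := hslt j hj
        have hs2 := hslt j' hj'
        rcases lt_trichotomy (j%p) (j'%p) with h | h | h
        · exfalso
          have h1 : (j%p)*r + r ≤ (j'%p)*r := by
            calc (j%p)*r + r = (j%p + 1)*r := by ring
            _ ≤ (j'%p)*r := Nat.mul_le_mul_right r (by omega)
          omega
        · exact h
        · exfalso
          have h1 : (j'%p)*r + r ≤ (j%p)*r := by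
            calc (j'%p)*r + r = (j'%p + 1)*r := by ring
            _ ≤ (j%p)*r := Nat.mul_le_mul_right r (by omega)
          omega
      have d1 : j = p*(j/p) + j%p := (Nat.div_add_mod j p).symm
      have d2 : j' = p*(j'/p) + j'%p := (Nat.div_add_mod j' p).symm
      rw [d1, d2, heqq, hieq]
    · exfalso
      have ht := htagfull j' hj' (lt_of_lt_of_le hgt (hqQ j hj))
      have h3 : (j'/p)*r' + r' ≤ (j/p)*r' := by
        calc (j'/p)*r' + r' = (j'/p + 1)*r' := by ring
        _ ≤ (j/p)*r' := Nat.mul_le_mul_right r' (by omega)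
      omega
  have := Finset.card_le_card_of_injOn ψ
      (fun j hj => Finset.mem_range.mpr (hψlt j hj)) hψinj
  rw [Finset.card_range] at this
  exact this

lemma consE_card {n r p j : ℕ} (hrn : r ≤ n) : (consE n r p j).card = r := by
  rw [consE, Finset.card_image_of_injOn, Finset.card_range]
  intro s hs t ht h
  simp only [Finset.mem_coe, Finset.mem_range] at hs ht
  have h1 : j*r + j/p + s ≡ j*r + j/p + t [MOD n] := h
  have h2 : s ≡ t [MOD n] := Nat.ModEq.add_left_cancel' _ h1
  unfold Nat.ModEq at h2
  have hs' : s % n = s := Nat.mod_eq_of_lt (lt_of_lt_of_le hs hrn)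
  have ht' : t % n = t := Nat.mod_eq_of_lt (lt_of_lt_of_le ht hrn)
  omega

lemma consE_pred_not_mem {n r p j : ℕ} (hrn : r < n) :
    ((j*r + j/p) % n + (n-1)) % n ∉ consE n r p j := by
  intro hmem
  rw [mem_consE] at hmem
  obtain ⟨s, hs, hx⟩ := hmem
  have h2 : ((j*r + j/p) % n + (n-1)) % n = ((j*r + j/p) + (n-1)) % n :=
    Nat.mod_add_mod _ _ _
  have h3 : j*r + j/p + s ≡ (j*r + j/p) + (n-1) [MOD n] := by
    unfold Nat.ModEq; omega
  have h4 : s ≡ (n-1) [MOD n] := Nat.ModEq.add_left_cancel' _ h3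
  unfold Nat.ModEq at h4
  have hs' : s % n = s := Nat.mod_eq_of_lt (lt_trans hs hrn)
  have : (n-1) % n = n-1 := Nat.mod_eq_of_lt (by omega)
  omega

lemma consE_eq_start {n r p j j' : ℕ} (hr : 0 < r) (hrn : r < n)
    (h : consE n r p j = consE n r p j') :
    (j*r + j/p) % n = (j'*r + j'/p) % n := by
  have hb' : (j'*r + j'/p) % n ∈ consE n r p j := by
    rw [h, mem_consE]
    exact ⟨0, hr, by rw [Nat.add_zero]⟩
  rw [mem_consE] at hb'
  obtain ⟨s, hs, hx⟩ := hb'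
  rcases Nat.eq_zero_or_pos s with h0 | h0
  · rw [h0, Nat.add_zero] at hx; omega
  · exfalso
    apply consE_pred_not_mem (n := n) (r := r) (p := p) (j := j') hrn
    rw [← h, mem_consE]
    refine ⟨s - 1, by omega, ?_⟩
    rw [← hx]
    have h2 : ((j*r + j/p + s) % n + (n-1)) % n = ((j*r + j/p + s) + (n-1)) % n :=
      Nat.mod_add_mod _ _ _
    have h3 : (j*r + j/p + s) + (n-1) = (j*r + j/p + (s-1)) + n := by omega
    rw [h2, h3, Nat.add_mod_right]

/-- the edges of the construction are pairwise distinct. -/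
lemma consE_inj {n r d m : ℕ} (hn : 0 < n) (hr : 0 < r) (hrn : r < n) (hdr : d ≤ r)
    (hm : m * r ≤ n * d) {j j' : ℕ} (hj : j < m) (hj' : j' < m)
    (h : consE n r (n / n.gcd r) j = consE n r (n / n.gcd r) j') : j = j' := by
  set g := n.gcd r with hgdef
  have hgn : g ∣ n := Nat.gcd_dvd_left n r
  have hgr : g ∣ r := Nat.gcd_dvd_right n r
  have hg : 0 < g := Nat.gcd_pos_of_pos_left r hn
  set p := n / g with hpdef
  have hp : 0 < p := Nat.div_pos (Nat.le_of_dvd hn hgn) hg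
  have hpg : p * g = n := Nat.div_mul_cancel hgn
  have hmn : m ≤ n := by
    have : m * r ≤ n * r := le_trans hm (Nat.mul_le_mul_left n hdr)
    exact Nat.le_of_mul_le_mul_right this hr
  have hqlt : ∀ i, i < m → i / p < g := by
    intro i hi
    rw [Nat.div_lt_iff_lt_mul hp]
    calc i < m := hi
    _ ≤ n := hmn
    _ = g * p := by rw [mul_comm] at hpg; exact hpg.symm
  have hstart := consE_eq_start hr hrn h
  -- reduce mod g : quotients agree
  have hqq : j / p = j' / p := by
    have h1 : (j*r + j/p) % n % g = (j'*r + j'/p) % n % g := by rw [hstart]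
    rw [Nat.mod_mod_of_dvd _ hgn, Nat.mod_mod_of_dvd _ hgn] at h1
    obtain ⟨b, hb⟩ := hgr
    have e1 : (j*r + j/p) % g = (j/p) % g := by
      rw [hb]
      have : j*(g*b) + j/p = j/p + (j*b)*g := by ring
      rw [this, Nat.add_mul_mod_self_right]
    have e2 : (j'*r + j'/p) % g = (j'/p) % g := by
      rw [hb]
      have : j'*(g*b) + j'/p = j'/p + (j'*b)*g := by ring
      rw [this, Nat.add_mul_mod_self_right]
    rw [e1, e2] at h1
    have q1 := hqlt j hj
    have q2 := hqlt j' hj'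
    rw [Nat.mod_eq_of_lt q1, Nat.mod_eq_of_lt q2] at h1
    exact h1
  -- now j*r ≡ j'*r mod n
  have hjr : j*r % n = j'*r % n := by
    have h1 : (j*r + j/p) % n = (j'*r + j/p) % n := by rw [hqq] at hstart ⊢; exact hstart
    have := Nat.ModEq.add_right_cancel' (j/p) (h1 : _ ≡ _ [MOD n])
    exact this
  -- wlog j ≤ j'
  rcases le_total j j' with hle | hle
  · obtain ⟨t, ht⟩ := Nat.exists_eq_add_of_le hle
    have hdvd : n ∣ t * r := by
      have h1 : j*r ≡ j*r + t*r [MOD n] := by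
        unfold Nat.ModEq
        rw [ht] at hjr
        have : (j + t) * r = j*r + t*r := by ring
        rw [this] at hjr
        exact hjr
      have h2 : 0 ≡ t*r [MOD n] := Nat.ModEq.add_left_cancel' (j*r) (by simpa using h1)
      exact Nat.modEq_zero_iff_dvd.mp h2.symm
    -- p ∣ t
    have hpt : p ∣ t := by
      obtain ⟨b, hb⟩ := hgr
      have h1 : p * g ∣ t * (g * b) := by rw [hpg, ← hb]; exact hdvd
      have h2 : p * g ∣ (t * b) * g := by
        have : t * (g * b) = (t * b) * g := by ring
        rwa [this] at h1
      have h3 : p ∣ t * b := by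
        rcases h2 with ⟨c, hc⟩
        refine ⟨c, ?_⟩
        have : (t*b) * g = (p * c) * g := by rw [hc]; ring
        exact Nat.eq_of_mul_eq_mul_right hg this
      have hcop : Nat.Coprime p (r / g) := Nat.coprime_div_gcd_div_gcd hg
      have hbrg : b = r / g := by rw [hb, Nat.mul_div_cancel_left b hg]
      rw [← hbrg] at hcop
      exact Nat.Coprime.dvd_of_dvd_mul_right hcop h3
    obtain ⟨u, hu⟩ := hpt
    have : j / p + u = j / p := by
      have : (j + p * u) / p = j / p + u := by
        rw [Nat.add_mul_div_left j u hp]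
      rw [← this, ← hu, ← ht, hqq]
    have hu0 : u = 0 := by omega
    rw [hu0, Nat.mul_zero] at hu
    omega
  · obtain ⟨t, ht⟩ := Nat.exists_eq_add_of_le hle
    have hdvd : n ∣ t * r := by
      have h1 : j'*r ≡ j'*r + t*r [MOD n] := by
        unfold Nat.ModEq
        rw [ht] at hjr
        have : (j' + t) * r = j'*r + t*r := by ring
        rw [this] at hjr
        exact hjr.symm
      have h2 : 0 ≡ t*r [MOD n] := Nat.ModEq.add_left_cancel' (j'*r) (by simpa using h1)
      exact Nat.modEq_zero_iff_dvd.mp h2.symm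
    have hpt : p ∣ t := by
      obtain ⟨b, hb⟩ := hgr
      have h1 : p * g ∣ t * (g * b) := by rw [hpg, ← hb]; exact hdvd
      have h2 : p * g ∣ (t * b) * g := by
        have : t * (g * b) = (t * b) * g := by ring
        rwa [this] at h1
      have h3 : p ∣ t * b := by
        rcases h2 with ⟨c, hc⟩
        refine ⟨c, ?_⟩
        have : (t*b) * g = (p * c) * g := by rw [hc]; ring
        exact Nat.eq_of_mul_eq_mul_right hg this
      have hcop : Nat.Coprime p (r / g) := Nat.coprime_div_gcd_div_gcd hg
      have hbrg : b = r / g := by rw [hb, Nat.mul_div_cancel_left b hg]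
      rw [← hbrg] at hcop
      exact Nat.Coprime.dvd_of_dvd_mul_right hcop h3
    obtain ⟨u, hu⟩ := hpt
    have : j' / p + u = j' / p := by
      have : (j' + p * u) / p = j' / p + u := by
        rw [Nat.add_mul_div_left j' u hp]
      rw [← this, ← hu, ← ht, hqq]
    have hu0 : u = 0 := by omega
    rw [hu0, Nat.mul_zero] at hu
    omega

lemma consE_lt {n r p j x : ℕ} (hn : 0 < n) (hx : x ∈ consE n r p j) : x < n := by
  rw [mem_consE] at hx
  obtain ⟨s, _, h⟩ := hx
  rw [← h]
  exact Nat.mod_lt _ hn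

lemma exists_good_H {n r d : ℕ} (hn : 0 < n) (hr : 0 < r) (hrn : r < n) (hdr : d ≤ r) :
    ∃ H : Finset (Finset (Fin n)), (∀ e ∈ H, e.card = r) ∧ H.card = n*d/r ∧
      ∀ v : Fin n, (H.filter (fun e => v ∈ e)).card ≤ d := by
  classical
  set p := n / n.gcd r with hp
  set m := n*d/r with hmdef
  have hm : m * r ≤ n * d := Nat.div_mul_le_self (n*d) r
  set F : ℕ → Finset (Fin n) :=
    fun j => (consE n r p j).attachFin (fun x hx => consE_lt hn hx) with hF
  have hFmem : ∀ j (v : Fin n), v ∈ F j ↔ (v : ℕ) ∈ consE n r p j := by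
    intro j v
    rw [hF]
    exact Finset.mem_attachFin _
  have hFinj : ∀ j ∈ range m, ∀ j' ∈ range m, F j = F j' → j = j' := by
    intro j hj j' hj' hFe
    refine consE_inj hn hr hrn hdr hm (mem_range.mp hj) (mem_range.mp hj') ?_
    ext x
    constructor
    · intro hx
      have hxn : x < n := consE_lt hn hx
      have : (⟨x, hxn⟩ : Fin n) ∈ F j := (hFmem j _).mpr hx
      rw [hFe] at this
      exact (hFmem j' _).mp this
    · intro hx
      have hxn : x < n := consE_lt hn hx
      have : (⟨x, hxn⟩ : Fin n) ∈ F j' := (hFmem j' _).mpr hx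
      rw [← hFe] at this
      exact (hFmem j _).mp this
  refine ⟨(range m).image F, ?_, ?_, ?_⟩
  · intro e he
    rw [Finset.mem_image] at he
    obtain ⟨j, _, rfl⟩ := he
    rw [hF]
    rw [Finset.card_attachFin]
    exact consE_card (le_of_lt hrn)
  · rw [Finset.card_image_of_injOn hFinj, Finset.card_range]
  · intro v
    have himg : ((range m).image F).filter (fun e => v ∈ e)
        = ((range m).filter (fun j => v ∈ F j)).image F := by
      rw [Finset.filter_image]
    rw [himg]
    calc (((range m).filter (fun j => v ∈ F j)).image F).card
        ≤ ((range m).filter (fun j => v ∈ F j)).card := Finset.card_image_le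
      _ = ((range m).filter (fun j => (v:ℕ) ∈ consE n r p j)).card := by
          congr 1
          apply Finset.filter_congr
          intro j _
          simp only [hFmem j v]
      _ ≤ d := consE_deg hn hr hdr hm v v.isLt

lemma sum_adj_inl_inl {α β : Type*} (G : SimpleGraph α) (H : SimpleGraph β) (a b : α) :
    (G.sum H).Adj (Sum.inl a) (Sum.inl b) ↔ G.Adj a b := Iff.rfl

lemma sum_adj_inr_inr {α β : Type*} (G : SimpleGraph α) (H : SimpleGraph β) (a b : β) :
    (G.sum H).Adj (Sum.inr a) (Sum.inr b) ↔ H.Adj a b := Iff.rfl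

lemma sum_adj_inl_inr {α β : Type*} (G : SimpleGraph α) (H : SimpleGraph β) (a : α) (b : β) :
    ¬ (G.sum H).Adj (Sum.inl a) (Sum.inr b) := fun h => by simpa [SimpleGraph.sum] using h

lemma sum_adj_inr_inl {α β : Type*} (G : SimpleGraph α) (H : SimpleGraph β) (a : β) (b : α) :
    ¬ (G.sum H).Adj (Sum.inr a) (Sum.inl b) := fun h => by simpa [SimpleGraph.sum] using h

lemma star_edge_mem {ℓ t : ℕ} (hl : 0 < ℓ) (i : Fin ℓ) :
    s((Sum.inl ((0 : Fin 1), (0 : Fin (ℓ+1))) : (Fin 1 × Fin (ℓ+1)) ⊕ (Fin t × Fin 2)),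
      Sum.inl (0, i.succ)) ∈ ((starsG 1 ℓ).sum (matchingG t)).edgeSet := by
  rw [SimpleGraph.mem_edgeSet, sum_adj_inl_inl]
  rw [starsG, SimpleGraph.fromRel_adj]
  refine ⟨?_, Or.inl ⟨rfl, rfl⟩⟩
  intro hcontra
  have : (0 : Fin (ℓ+1)) = i.succ := congrArg Prod.snd hcontra
  exact (Fin.succ_ne_zero i) this.symm

/-- a Berge copy of the star-union-matching graph yields a vertex of degree ≥ ℓ. -/
lemma copy_gives_deg {V : Type*} [DecidableEq V] {ℓ t : ℕ} (hl : 0 < ℓ)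
    {H : Finset (Finset V)}
    (h : IsBergeCopy ((starsG 1 ℓ).sum (matchingG t)) H) :
    ∃ v : V, ℓ ≤ (H.filter (fun e => v ∈ e)).card := by
  classical
  obtain ⟨f, φ, hf, hφ, hall⟩ := h
  set c : (Fin 1 × Fin (ℓ+1)) ⊕ (Fin t × Fin 2) := Sum.inl (0, 0) with hc
  refine ⟨f c, ?_⟩
  set E : Fin ℓ → Sym2 ((Fin 1 × Fin (ℓ+1)) ⊕ (Fin t × Fin 2)) :=
    fun i => s(c, Sum.inl (0, i.succ)) with hE
  have hEmem : ∀ i, E i ∈ ((starsG 1 ℓ).sum (matchingG t)).edgeSet :=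
    fun i => star_edge_mem hl i
  have himg : ∀ i : Fin ℓ, φ (E i) ∈ H.filter (fun e => f c ∈ e) := by
    intro i
    obtain ⟨h1, h2⟩ := hall (E i) (hEmem i)
    rw [Finset.mem_filter]
    exact ⟨h1, h2 c (by rw [hE]; exact Sym2.mem_mk_left _ _)⟩
  have hinj : Function.Injective (fun i : Fin ℓ => φ (E i)) := by
    intro i i' heq
    have hEe : E i = E i' := hφ (hEmem i) (hEmem i') heq
    rw [hE] at hEe
    simp only [hc, Sym2.eq, Sym2.rel_iff', Prod.swap_prod_mk, Prod.mk.injEq, Sum.inl.injEq] at hEe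
    rcases hEe with ⟨-, -, h2⟩ | ⟨⟨-, h1⟩, -⟩
    · exact Fin.succ_injective _ h2
    · exact absurd h1.symm (Fin.succ_ne_zero i')
  calc ℓ = (univ : Finset (Fin ℓ)).card := by rw [Finset.card_univ, Fintype.card_fin]
  _ ≤ (H.filter (fun e => f c ∈ e)).card :=
      Finset.card_le_card_of_injOn (fun i => φ (E i)) (fun i _ => himg i)
        (fun i _ i' _ h => hinj h)

/-- canonical form of edges of the star ⊔ matching graph. -/
lemma edge_cases {ℓ k' : ℕ} (e : Sym2 ((Fin 1 × Fin (ℓ+1)) ⊕ (Fin k' × Fin 2)))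
    (he : e ∈ ((starsG 1 ℓ).sum (matchingG k')).edgeSet) :
    (∃ i : Fin ℓ, e = s(Sum.inl (0, 0), Sum.inl (0, i.succ))) ∨
    (∃ j : Fin k', e = s(Sum.inr (j, 0), Sum.inr (j, 1))) := by
  induction e with
  | _ x y =>
    rw [SimpleGraph.mem_edgeSet] at he
    match x, y with
    | Sum.inl (p, i), Sum.inl (p', i') =>
      rw [sum_adj_inl_inl, starsG, SimpleGraph.fromRel_adj] at he
      have hp0 : p = 0 := Subsingleton.elim _ _
      have hp'0 : p' = 0 := Subsingleton.elim _ _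
      subst hp0; subst hp'0
      obtain ⟨hne, hrel⟩ := he
      left
      rcases hrel with ⟨-, h0⟩ | ⟨-, h0⟩
      · simp only [Prod.snd] at h0
        subst h0
        have hi' : i' ≠ 0 := by
          intro hz; subst hz; exact hne rfl
        refine ⟨i'.pred hi', ?_⟩
        rw [Fin.succ_pred]
      · simp only [Prod.snd] at h0
        subst h0
        have hi : i ≠ 0 := by
          intro hz; subst hz; exact hne rfl
        refine ⟨i.pred hi, ?_⟩
        rw [Fin.succ_pred, Sym2.eq_swap]
    | Sum.inl _, Sum.inr _ => exact absurd he (sum_adj_inl_inr _ _ _ _)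
    | Sum.inr _, Sum.inl _ => exact absurd he (sum_adj_inr_inl _ _ _ _)
    | Sum.inr (j, t), Sum.inr (j', t') =>
      rw [sum_adj_inr_inr, matchingG, SimpleGraph.fromRel_adj] at he
      obtain ⟨hne, hrel⟩ := he
      have hj : j = j' := by rcases hrel with h | h; exact h; exact h.symm
      subst hj
      right
      have htne : (t : ℕ) ≠ (t' : ℕ) := by
        intro h; exact hne (by rw [Fin.ext h])
      have ht2 : (t : ℕ) < 2 := t.isLt
      have ht2' : (t' : ℕ) < 2 := t'.isLt
      rcases (by omega : (t:ℕ) = 0 ∧ (t':ℕ) = 1 ∨ (t:ℕ) = 1 ∧ (t':ℕ) = 0) with ⟨h1, h2⟩ | ⟨h1, h2⟩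
      · rw [show t = 0 from Fin.ext h1, show t' = 1 from Fin.ext h2]
        exact ⟨j, rfl⟩
      · rw [show t = 1 from Fin.ext h1, show t' = 0 from Fin.ext h2]
        exact ⟨j, Sym2.eq_swap⟩

/-- build a Berge copy of star ∪ matching from the raw data. -/
lemma build_copy {V : Type*} [DecidableEq V] {ℓ k' : ℕ}
    {H : Finset (Finset V)}
    (center : V) (leaf : Fin ℓ → V) (a b : Fin k' → V)
    (se : Fin ℓ → Finset V) (me : Fin k' → Finset V)
    (hseH : ∀ i, se i ∈ H) (hmeH : ∀ j, me j ∈ H)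
    (hcse : ∀ i, center ∈ se i) (hlse : ∀ i, leaf i ∈ se i)
    (hame : ∀ j, a j ∈ me j) (hbme : ∀ j, b j ∈ me j)
    (hleaf : Function.Injective leaf) (hlc : ∀ i, leaf i ≠ center)
    (ha : Function.Injective a) (hb : Function.Injective b)
    (hab : ∀ j j', a j ≠ b j') (hac : ∀ j, a j ≠ center) (hbc : ∀ j, b j ≠ center)
    (hal : ∀ j i, a j ≠ leaf i) (hbl : ∀ j i, b j ≠ leaf i)
    (hse : Function.Injective se) (hme : Function.Injective me)
    (hsm : ∀ i j, se i ≠ me j) :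
    IsBergeCopy ((starsG 1 ℓ).sum (matchingG k')) H := by
  classical
  set f : (Fin 1 × Fin (ℓ+1)) ⊕ (Fin k' × Fin 2) → V :=
    Sum.elim (fun q => if h : q.2 = 0 then center else leaf (q.2.pred h))
      (fun q => if q.2 = 0 then a q.1 else b q.1) with hfdef
  set hh : (Fin 1 × Fin (ℓ+1)) ⊕ (Fin k' × Fin 2) → Finset V :=
    Sum.elim (fun q => if h : q.2 = 0 then ∅ else se (q.2.pred h))
      (fun q => me q.1) with hhdef
  set φ : Sym2 ((Fin 1 × Fin (ℓ+1)) ⊕ (Fin k' × Fin 2)) → Finset V :=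
    Sym2.lift ⟨fun x y => hh x ∪ hh y, fun x y => Finset.union_comm _ _⟩ with hφdef
  have hφmk : ∀ x y, φ s(x, y) = hh x ∪ hh y := by
    intro x y
    rw [hφdef, Sym2.lift_mk]
  have hφ_star : ∀ i : Fin ℓ,
      φ s(Sum.inl ((0 : Fin 1), (0 : Fin (ℓ+1))), Sum.inl (0, i.succ)) = se i := by
    intro i
    rw [hφmk, hhdef]
    simp [Fin.succ_ne_zero, Fin.pred_succ]
  have hφ_match : ∀ j : Fin k',
      φ s(Sum.inr (j, (0 : Fin 2)), Sum.inr (j, 1)) = me j := by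
    intro j
    rw [hφmk, hhdef]
    simp
  have hf_center : f (Sum.inl ((0 : Fin 1), (0 : Fin (ℓ+1)))) = center := by
    rw [hfdef]; simp
  have hf_leaf : ∀ i : Fin ℓ, f (Sum.inl ((0 : Fin 1), i.succ)) = leaf i := by
    intro i
    rw [hfdef]
    simp [Fin.succ_ne_zero, Fin.pred_succ]
  have hf_a : ∀ j : Fin k', f (Sum.inr (j, (0 : Fin 2))) = a j := by
    intro j; rw [hfdef]; simp
  have hf_b : ∀ j : Fin k', f (Sum.inr (j, (1 : Fin 2))) = b j := by
    intro j; rw [hfdef]; simp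
  refine ⟨f, φ, ?_, ?_, ?_⟩
  · -- injectivity of f
    intro x y hxy
    match x, y with
    | Sum.inl (p, i), Sum.inl (p', i') =>
      have hp : p = p' := Subsingleton.elim _ _
      subst hp
      rw [hfdef] at hxy
      simp only [Sum.elim_inl] at hxy
      split_ifs at hxy with h1 h2 h2
      · rw [show i = (p, i).2 from rfl, h1, show i' = (p, i').2 from rfl, h2]
      · exact absurd hxy.symm (hlc _)
      · exact absurd hxy (hlc _)
      · have h3 := hleaf hxy
        have h4 : (p, i).2 = (p, i').2 := by
          have h5 := congrArg Fin.succ h3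
          rwa [Fin.succ_pred, Fin.succ_pred] at h5
        simp only [] at h4
        rw [h4]
    | Sum.inl (p, i), Sum.inr (j, t) =>
      exfalso
      rw [hfdef] at hxy
      simp only [Sum.elim_inl, Sum.elim_inr] at hxy
      split_ifs at hxy with h1 h2 h2
      · exact (hac j) hxy.symm
      · exact (hbc j) hxy.symm
      · exact (hal j _) hxy.symm
      · exact (hbl j _) hxy.symm
    | Sum.inr (j, t), Sum.inl (p, i) =>
      exfalso
      rw [hfdef] at hxy
      simp only [Sum.elim_inl, Sum.elim_inr] at hxy
      split_ifs at hxy with h1 h2 h2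
      · exact (hac j) hxy
      · exact (hal j _) hxy
      · exact (hbc j) hxy
      · exact (hbl j _) hxy
    | Sum.inr (j, t), Sum.inr (j', t') =>
      rw [hfdef] at hxy
      simp only [Sum.elim_inr] at hxy
      split_ifs at hxy with h1 h2 h2
      · have hj : j = j' := ha hxy
        have h4 : (j, t).2 = (j', t').2 := by
          simp only [] at h1 h2 ⊢
          rw [h1, h2]
        simp only [] at h4
        rw [hj, h4]
      · exact absurd hxy (hab j j')
      · exact absurd hxy.symm (hab j' j)
      · have hj : j = j' := hb hxy
        have ht : t = t' := by
          have h3 : (t:ℕ) ≠ 0 := fun hz => h1 (Fin.ext hz)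
          have h4 : (t':ℕ) ≠ 0 := fun hz => h2 (Fin.ext hz)
          have := t.isLt
          have := t'.isLt
          exact Fin.ext (by omega)
        rw [hj, ht]
  · -- InjOn φ
    intro e he e' he' heq
    rcases edge_cases e he with ⟨i, rfl⟩ | ⟨j, rfl⟩ <;>
      rcases edge_cases e' he' with ⟨i', rfl⟩ | ⟨j', rfl⟩
    · rw [hφ_star, hφ_star] at heq
      rw [hse heq]
    · rw [hφ_star, hφ_match] at heq
      exact absurd heq (hsm i j')
    · rw [hφ_star, hφ_match] at heq
      exact absurd heq.symm (hsm i' j)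
    · rw [hφ_match, hφ_match] at heq
      rw [hme heq]
  · -- edge conditions
    intro e he
    rcases edge_cases e he with ⟨i, rfl⟩ | ⟨j, rfl⟩
    · rw [hφ_star]
      refine ⟨hseH i, ?_⟩
      intro x hx
      rw [Sym2.mem_iff] at hx
      rcases hx with rfl | rfl
      · rw [hf_center]; exact hcse i
      · rw [hf_leaf]; exact hlse i
    · rw [hφ_match]
      refine ⟨hmeH j, ?_⟩
      intro x hx
      rw [Sym2.mem_iff] at hx
      rcases hx with rfl | rfl
      · rw [hf_a]; exact hame j
      · rw [hf_b]; exact hbme j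

/-- choose an injective enumeration of `t` elements of a finset with `t ≤ s.card`. -/
lemma exists_enum {α : Type*} [DecidableEq α] {s : Finset α} {t : ℕ} (h : t ≤ s.card) :
    ∃ g : Fin t → α, Function.Injective g ∧ ∀ i, g i ∈ s := by
  classical
  obtain ⟨u, hus, hcard⟩ := Finset.exists_subset_card_eq h
  have e := u.equivFin
  refine ⟨fun i => (e.symm (Fin.cast hcard.symm i) : α), ?_, ?_⟩
  · intro i i' hii
    have h1 : e.symm (Fin.cast hcard.symm i) = e.symm (Fin.cast hcard.symm i') :=
      Subtype.ext hii
    have h2 := e.symm.injective h1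
    have h3 : (i : ℕ) = (i' : ℕ) := by simpa using congrArg Fin.val h2
    exact Fin.val_injective h3
  · intro i
    exact hus (e.symm (Fin.cast hcard.symm i)).2

/-- Hall: a vertex of degree ≥ ℓ has a Berge star (ℓ ≤ r+1, r ≥ 2). -/
lemma exists_star {V : Type*} [DecidableEq V] {H : Finset (Finset V)} {r ℓ : ℕ}
    (hunif : ∀ e ∈ H, e.card = r) (hl : 0 < ℓ) (hlr : ℓ ≤ r + 1) (hr : 2 ≤ r)
    (v : V) (hdeg : ℓ ≤ (H.filter (fun e => v ∈ e)).card) :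
    ∃ (se : Fin ℓ → Finset V) (leaf : Fin ℓ → V),
      (∀ i, se i ∈ H) ∧ (∀ i, v ∈ se i) ∧ Function.Injective se ∧
      Function.Injective leaf ∧ (∀ i, leaf i ∈ se i) ∧ (∀ i, leaf i ≠ v) := by
  classical
  obtain ⟨se, hseinj, hsemem⟩ := exists_enum hdeg
  have hseH : ∀ i, se i ∈ H := fun i => (Finset.mem_filter.mp (hsemem i)).1
  have hsev : ∀ i, v ∈ se i := fun i => (Finset.mem_filter.mp (hsemem i)).2
  have hsecard : ∀ i, (se i).card = r := fun i => hunif _ (hseH i)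
  set t : Fin ℓ → Finset V := fun i => (se i).erase v with ht
  have htcard : ∀ i, (t i).card = r - 1 := by
    intro i
    rw [ht]
    rw [Finset.card_erase_of_mem (hsev i), hsecard]
  have htinj : Function.Injective t := by
    intro i i' hii
    apply hseinj
    have h1 : insert v (t i) = insert v (t i') := by rw [hii]
    rwa [ht, Finset.insert_erase (hsev i), Finset.insert_erase (hsev i')] at h1
  have hall : ∀ s : Finset (Fin ℓ), s.card ≤ (s.biUnion t).card := by
    intro s
    rcases Finset.eq_empty_or_nonempty s with rfl | ⟨i0, hi0⟩
    · simp
    by_contra hcon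
    push_neg at hcon
    set u := (s.biUnion t).card with hu
    have hur : r - 1 ≤ u := by
      rw [hu]
      calc r - 1 = (t i0).card := (htcard i0).symm
      _ ≤ (s.biUnion t).card :=
          Finset.card_le_card (fun x hx => Finset.mem_biUnion.mpr ⟨i0, hi0, hx⟩)
    have hste : s.card ≤ Nat.choose u (r-1) := by
      have hmap : ∀ i ∈ s, t i ∈ (s.biUnion t).powersetCard (r-1) := by
        intro i hi
        rw [Finset.mem_powersetCard]
        exact ⟨fun x hx => Finset.mem_biUnion.mpr ⟨i, hi, hx⟩, htcard i⟩
      have := Finset.card_le_card_of_injOn t hmap (fun i _ i' _ h => htinj h)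
      rwa [Finset.card_powersetCard] at this
    have hsl : s.card ≤ ℓ := by
      calc s.card ≤ (univ : Finset (Fin ℓ)).card := Finset.card_le_card (Finset.subset_univ s)
      _ = ℓ := by rw [Finset.card_univ, Fintype.card_fin]
    have hc1 : Nat.choose u (r-1) ≤ Nat.choose (s.card - 1) (r-1) :=
      Nat.choose_le_choose _ (by omega)
    have hcr : s.card - 1 ≤ r := by omega
    rcases Nat.lt_or_ge (s.card - 1) (r - 1) with hlt | hge
    · -- choose = 0
      have : Nat.choose (s.card - 1) (r-1) = 0 := Nat.choose_eq_zero_of_lt hlt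
      omega
    · rcases Nat.lt_or_ge (s.card - 1) r with hlt2 | hge2
      · -- s.card - 1 = r - 1, i.e. s.card = r (note s.card ≥ 1)
        have hcard : s.card - 1 = r - 1 := by omega
        have : Nat.choose (s.card - 1) (r-1) = 1 := by rw [hcard]; exact Nat.choose_self _
        have hsr : s.card = r := by
          have hs1 : 1 ≤ s.card := Finset.card_pos.mpr ⟨i0, hi0⟩
          omega
        omega
      · -- s.card - 1 = r, s.card = r + 1
        have hcard : s.card - 1 = r := by omega
        have h2 : Nat.choose (s.card - 1) (r-1) = Nat.choose r (r - 1) := by rw [hcard]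
        have h3 : Nat.choose r (r-1) = r := by
          have h5 := Nat.choose_symm (show r - 1 ≤ r by omega)
          have h4 : r - (r-1) = 1 := by omega
          rw [h4, Nat.choose_one_right] at h5
          exact h5.symm
        omega
  obtain ⟨leaf, hleafinj, hleafmem⟩ :=
    (Finset.all_card_le_biUnion_card_iff_exists_injective t).mp hall
  refine ⟨se, leaf, hseH, hsev, hseinj, hleafinj, ?_, ?_⟩
  · intro i
    exact Finset.mem_of_mem_erase (hleafmem i)
  · intro i
    exact Finset.ne_of_mem_erase (hleafmem i)

/-- fuel for the sunflower extraction. -/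
def sunf (w r : ℕ) : ℕ → ℕ
  | 0 => 1
  | (j+1) => w * r * (sunf w r j + 1)

lemma sunflower_extract {V : Type*} [DecidableEq V] {r w : ℕ} (hw : 0 < w) (hr : 0 < r) :
    ∀ (jj : ℕ) (C : Finset V) (H : Finset (Finset V)), (∀ e ∈ H, e.card = r) →
    C.card + jj = r →
    sunf w r jj ≤ (H.filter (fun e => C ⊂ e)).card →
    ∃ (C' : Finset V) (es : Fin w → Finset V), C ⊆ C' ∧ (∀ i, es i ∈ H) ∧
      (∀ i, C' ⊆ es i) ∧ (∀ i, (es i \ C').Nonempty) ∧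
      (∀ i i', i ≠ i' → Disjoint (es i \ C') (es i' \ C')) := by
  intro jj
  induction jj with
  | zero =>
    intro C H hunif hcard hbig
    exfalso
    have : H.filter (fun e => C ⊂ e) = ∅ := by
      rw [Finset.filter_eq_empty_iff]
      intro e he hC
      have h1 : C.card < e.card := Finset.card_lt_card hC
      rw [hunif e he] at h1
      omega
    rw [this] at hbig
    simp [sunf] at hbig
  | succ jj ih =>
    intro C H hunif hcard hbig
    set L := H.filter (fun e => C ⊂ e) with hL
    set P := L.powerset.filter
      (fun M => ∀ e ∈ M, ∀ e' ∈ M, e ≠ e' → Disjoint (e \ C) (e' \ C)) with hP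
    have hPne : P.Nonempty := by
      refine ⟨∅, ?_⟩
      rw [hP, Finset.mem_filter]
      exact ⟨Finset.empty_mem_powerset L, by intro e he; exact absurd he (Finset.notMem_empty e)⟩
    obtain ⟨M, hMP, hMmax⟩ := Finset.exists_max_image P Finset.card hPne
    have hMsub : M ⊆ L := Finset.mem_powerset.mp (Finset.mem_filter.mp hMP).1
    have hMdisj := (Finset.mem_filter.mp hMP).2
    rcases Nat.lt_or_ge M.card w with hMlt | hMge
    · -- M is a maximal petal-disjoint family of size < w
      
      set U := M.biUnion (fun e => e \ C) with hU
      have hUcard : U.card ≤ (w-1) * r := by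
        calc U.card ≤ ∑ e ∈ M, (e \ C).card := Finset.card_biUnion_le
        _ ≤ ∑ _e ∈ M, r := by
            refine Finset.sum_le_sum ?_
            intro e he
            calc (e \ C).card ≤ e.card := Finset.card_le_card (Finset.sdiff_subset)
            _ = r := hunif e (Finset.mem_of_mem_filter _ (hMsub he))
        _ = M.card * r := by rw [Finset.sum_const, smul_eq_mul]
        _ ≤ (w-1) * r := Nat.mul_le_mul_right r (by omega)
      have hmeet : ∀ e ∈ L, ∃ u ∈ U, u ∈ e \ C := by
        intro e he
        by_cases heM : e ∈ M
        · have hne : (e \ C).Nonempty := by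
            rw [Finset.sdiff_nonempty]
            exact fun hsub => ((Finset.mem_filter.mp he).2).2 hsub
          obtain ⟨x, hx⟩ := hne
          exact ⟨x, Finset.mem_biUnion.mpr ⟨e, heM, hx⟩, hx⟩
        · by_contra hcon
          push_neg at hcon
          -- then insert e M is a bigger good family
          have hgood : insert e M ∈ P := by
            rw [hP, Finset.mem_filter]
            constructor
            · rw [Finset.mem_powerset]
              intro x hx
              rcases Finset.mem_insert.mp hx with rfl | hx
              · exact he
              · exact hMsub hx
            · intro e1 he1 e2 he2 hne
              have key : ∀ e' ∈ M, Disjoint (e \ C) (e' \ C) := by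
                intro e' he'
                rw [Finset.disjoint_left]
                intro x hx hx2
                exact hcon x (Finset.mem_biUnion.mpr ⟨e', he', hx2⟩) hx
              rcases Finset.mem_insert.mp he1 with h1 | h1
              · rcases Finset.mem_insert.mp he2 with h2 | h2
                · exact absurd (h1.trans h2.symm) hne
                · rw [h1]; exact key e2 h2
              · rcases Finset.mem_insert.mp he2 with h2 | h2
                · rw [h2]; exact (key e1 h1).symm
                · exact hMdisj e1 h1 e2 h2 hne
          have := hMmax _ hgood
          rw [Finset.card_insert_of_notMem heM] at this
          omega
      -- counting: some u ∈ U lies in many members of L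
      have hcover : L ⊆ U.biUnion (fun u => L.filter (fun e => u ∈ e \ C)) := by
        intro e he
        obtain ⟨u, huU, hue⟩ := hmeet e he
        exact Finset.mem_biUnion.mpr ⟨u, huU, Finset.mem_filter.mpr ⟨he, hue⟩⟩
      have hLcard : sunf w r (jj+1) ≤ L.card := hbig
      have : ∃ u ∈ U, sunf w r jj + 1 ≤ (L.filter (fun e => u ∈ e \ C)).card := by
        by_contra hcon
        push_neg at hcon
        have h1 : L.card ≤ ∑ u ∈ U, (L.filter (fun e => u ∈ e \ C)).card :=
          le_trans (Finset.card_le_card hcover) Finset.card_biUnion_le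
        have h2 : ∑ u ∈ U, (L.filter (fun e => u ∈ e \ C)).card ≤ U.card * (sunf w r jj) := by
          calc ∑ u ∈ U, (L.filter (fun e => u ∈ e \ C)).card ≤ ∑ _u ∈ U, sunf w r jj := by
                refine Finset.sum_le_sum ?_
                intro u hu
                have := hcon u hu
                omega
          _ = U.card * sunf w r jj := by rw [Finset.sum_const, smul_eq_mul]
        have h3 : U.card * sunf w r jj ≤ ((w-1)*r) * sunf w r jj :=
          Nat.mul_le_mul_right _ hUcard
        have h4 : ((w-1)*r) * sunf w r jj < w * r * (sunf w r jj + 1) := by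
          have e1 : w * r * (sunf w r jj + 1) = w*r*(sunf w r jj) + w*r := by ring
          have e2 : ((w-1)*r) * sunf w r jj ≤ w*r*sunf w r jj := by
            have : (w-1)*r ≤ w*r := Nat.mul_le_mul_right r (by omega)
            exact Nat.mul_le_mul_right _ this
          have e3 : 0 < w * r := Nat.mul_pos hw hr
          omega
        have h5 : sunf w r (jj+1) = w * r * (sunf w r jj + 1) := rfl
        omega
      obtain ⟨u, huU, hucard⟩ := this
      have huC : u ∉ C := by
        rw [hU] at huU
        obtain ⟨e, _, hue⟩ := Finset.mem_biUnion.mp huU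
        exact (Finset.mem_sdiff.mp hue).2
      -- pass to the bigger core
      have hsub2 : L.filter (fun e => u ∈ e \ C) ⊆
          insert (insert u C) (H.filter (fun e => insert u C ⊂ e)) := by
        intro e he
        rw [Finset.mem_filter] at he
        obtain ⟨heL, hue⟩ := he
        rw [hL, Finset.mem_filter] at heL
        obtain ⟨heH, hCe⟩ := heL
        have hsub : insert u C ⊆ e := by
          intro x hx
          rcases Finset.mem_insert.mp hx with rfl | hx
          · exact (Finset.mem_sdiff.mp hue).1
          · exact hCe.1 hx
        rcases eq_or_ne e (insert u C) with rfl | hne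
        · exact Finset.mem_insert_self _ _
        · refine Finset.mem_insert.mpr (Or.inr ?_)
          rw [Finset.mem_filter]
          exact ⟨heH, Finset.ssubset_iff_subset_ne.mpr ⟨hsub, hne.symm⟩⟩
      have hnext : sunf w r jj ≤ (H.filter (fun e => insert u C ⊂ e)).card := by
        have h1 := Finset.card_le_card hsub2
        have h2 : (insert (insert u C) (H.filter (fun e => insert u C ⊂ e))).card
            ≤ (H.filter (fun e => insert u C ⊂ e)).card + 1 := Finset.card_insert_le _ _
        omega
      obtain ⟨C', es, hCC', rest⟩ := ih (insert u C) H hunif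
        (by rw [Finset.card_insert_of_notMem huC]; omega) hnext
      exact ⟨C', es, le_trans (Finset.subset_insert u C) hCC', rest⟩

    · -- take C' = C
      -- M is big enough: take C' = C
      obtain ⟨es, hesinj, hesmem⟩ := exists_enum hMge
      refine ⟨C, fun i => es i, Finset.Subset.refl C, ?_, ?_, ?_, ?_⟩
      · intro i
        exact Finset.mem_of_mem_filter _ (hMsub (hesmem i))
      · intro i
        have := (Finset.mem_filter.mp (hMsub (hesmem i))).2
        exact le_of_lt this
      · intro i
        have := (Finset.mem_filter.mp (hMsub (hesmem i))).2
        rw [Finset.sdiff_nonempty]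
        exact fun hsub => this.2 hsub
      · intro i i' hii
        exact hMdisj _ (hesmem i) _ (hesmem i') (fun h => hii (hesinj h))
lemma sum_deg {V : Type*} [Fintype V] [DecidableEq V] (H : Finset (Finset V)) :
    ∑ v : V, (H.filter (fun e => v ∈ e)).card = ∑ e ∈ H, e.card := by
  simp only [Finset.card_filter]
  rw [Finset.sum_comm]
  refine Finset.sum_congr rfl ?_
  intro e _
  rw [← Finset.card_filter]
  congr 1
  exact Finset.filter_univ_mem e

lemma exists_big_degree {n r d : ℕ} (hr : 0 < r) {H : Finset (Finset (Fin n))}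
    (hunif : ∀ e ∈ H, e.card = r) (hcard : n * d / r < H.card) :
    ∃ v : Fin n, d + 1 ≤ (H.filter (fun e => v ∈ e)).card := by
  classical
  by_contra hno
  push_neg at hno
  have hsum : ∑ v : Fin n, (H.filter (fun e => v ∈ e)).card ≤ n * d := by
    calc ∑ v : Fin n, (H.filter (fun e => v ∈ e)).card
        ≤ (Finset.univ : Finset (Fin n)).card * d := by
          apply Finset.sum_le_card_nsmul
          intro v _
          have := hno v
          omega
    _ = n * d := by rw [Finset.card_univ, Fintype.card_fin]
  have hsum2 : ∑ e ∈ H, e.card = H.card * r := by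
    calc ∑ e ∈ H, e.card = ∑ _e ∈ H, r := Finset.sum_congr rfl hunif
    _ = H.card * r := by rw [Finset.sum_const, smul_eq_mul]
  have heq := sum_deg H
  rw [hsum2] at heq
  have h1 : n * d / r + 1 ≤ H.card := hcard
  have h2 : r * (n * d / r + 1) ≤ r * H.card := Nat.mul_le_mul_left r h1
  have h3 := Nat.div_add_mod (n * d) r
  have h4 : r * (n * d / r + 1) = r * (n * d / r) + r := by ring
  have h5 : (n * d) % r < r := Nat.mod_lt _ hr
  have h6 : r * H.card = H.card * r := by ring
  omega


lemma sunf_pos (w r j : ℕ) (hw : 0 < w) (hr : 0 < r) : 1 ≤ sunf w r j := by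
  cases j with
  | zero => exact le_refl 1
  | succ jj =>
    have : 0 < w * r := Nat.mul_pos hw hr
    have h2 : sunf w r (jj+1) = w * r * (sunf w r jj + 1) := rfl
    have h3 : 1 ≤ sunf w r jj + 1 := by omega
    calc 1 ≤ w * r := this
    _ = w * r * 1 := by ring
    _ ≤ w * r * (sunf w r jj + 1) := Nat.mul_le_mul_left _ h3
    _ = sunf w r (jj+1) := rfl

lemma copy_of_big {V : Type*} [DecidableEq V] {ℓ k r : ℕ} (hl : 2 ≤ ℓ) (hk : 2 ≤ k)
    (hkr : k < r) (hlr : ℓ ≤ r + 1)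
    {H : Finset (Finset V)} (hunif : ∀ e ∈ H, e.card = r)
    (hbig : sunf (ℓ + k + r + 2) r r ≤ H.card)
    (hdeg : ∃ v, ℓ ≤ (H.filter (fun e => v ∈ e)).card) :
    IsBergeCopy ((starsG 1 ℓ).sum (matchingG (k-1))) H := by
  classical
  set w := ℓ + k + r + 2 with hwdef
  have hw : 0 < w := by omega
  have hr : 0 < r := by omega
  have hr2 : 2 ≤ r := by omega
  have hℓw : ℓ ≤ w := by omega
  have hkw : ℓ + (k-1) ≤ w := by omega
  have hfilt : H.filter (fun e => (∅ : Finset V) ⊂ e) = H := by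
    apply Finset.filter_true_of_mem
    intro e he
    rw [Finset.empty_ssubset]
    rw [← Finset.card_pos, hunif e he]
    exact hr
  obtain ⟨C', es, -, hesH, hC'es, hpet, hdisj⟩ :=
    sunflower_extract hw hr r (∅ : Finset V) H hunif (by simp) (by rw [hfilt]; exact hbig)
  have hesne : ∀ i i' : Fin w, i ≠ i' → es i ≠ es i' := by
    intro i i' hii heq
    obtain ⟨x, hx⟩ := hpet i
    rw [heq] at hx
    have hdx := hdisj i i' hii
    rw [heq, Finset.disjoint_left] at hdx
    exact hdx hx hx
  rcases Finset.eq_empty_or_nonempty C' with rfl | hC'ne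
  · -- C' = ∅ : w pairwise disjoint edges
    simp only [Finset.sdiff_empty] at hpet hdisj
    obtain ⟨v, hvdeg⟩ := hdeg
    obtain ⟨se, leaf, hseH, hsev, hseinj, hleafinj, hleafmem, hleafv⟩ :=
      exists_star hunif (by omega) hlr hr2 v hvdeg
    set S := insert v (Finset.image leaf Finset.univ) with hS
    have hScard : S.card ≤ ℓ + 1 := by
      calc S.card ≤ (Finset.image leaf Finset.univ).card + 1 := Finset.card_insert_le _ _
      _ ≤ (Finset.univ : Finset (Fin ℓ)).card + 1 := by
          have := Finset.card_image_le (f := leaf) (s := Finset.univ)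
          omega
      _ = ℓ + 1 := by rw [Finset.card_univ, Fintype.card_fin]
    set bad := Finset.univ.filter (fun i : Fin w => ¬ Disjoint (es i) S) with hbad
    have hbadsel : ∀ i : Fin w, ∃ x, i ∈ bad → x ∈ es i ∧ x ∈ S := by
      intro i
      by_cases hi : i ∈ bad
      · rw [hbad, Finset.mem_filter] at hi
        obtain ⟨x, hx1, hx2⟩ := Finset.not_disjoint_iff.mp hi.2
        exact ⟨x, fun _ => ⟨hx1, hx2⟩⟩
      · exact ⟨v, fun h => absurd h hi⟩
    choose wit hwit using hbadsel
    have hbadcard : bad.card ≤ ℓ + 1 := by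
      have h1 : bad.card ≤ S.card := by
        apply Finset.card_le_card_of_injOn wit (fun i hi => (hwit i hi).2)
        intro i hi i' hi' hww
        by_contra hne
        have hdx := hdisj i i' hne
        rw [Finset.disjoint_left] at hdx
        exact hdx (hwit i hi).1 (hww ▸ (hwit i' hi').1)
      omega
    set good := Finset.univ.filter (fun i : Fin w => Disjoint (es i) S) with hgood
    have hgoodcard : k - 1 ≤ good.card := by
      have := Finset.card_filter_add_card_filter_not
        (s := (Finset.univ : Finset (Fin w))) (p := fun i => Disjoint (es i) S)
      rw [Finset.card_univ, Fintype.card_fin] at this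
      have : good.card + bad.card = w := this
      omega
    obtain ⟨idx, hidxinj, hidxmem⟩ := exists_enum hgoodcard
    have hidxdisj : ∀ j, Disjoint (es (idx j)) S := by
      intro j
      have := hidxmem j
      rw [hgood, Finset.mem_filter] at this
      exact this.2
    have hmecard : ∀ j : Fin (k-1), 1 < (es (idx j)).card := by
      intro j
      rw [hunif _ (hesH (idx j))]
      omega
    have hab2 : ∀ j : Fin (k-1), ∃ x ∈ es (idx j), ∃ y ∈ es (idx j), x ≠ y :=
      fun j => Finset.one_lt_card.mp (hmecard j)
    choose af haf bf hbf hafbf using hab2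
    have hnotinS : ∀ j (x : V), x ∈ es (idx j) → x ∉ S := by
      intro j x hx
      have := hidxdisj j
      rw [Finset.disjoint_left] at this
      exact this hx
    have hleafS : ∀ i, leaf i ∈ S := by
      intro i
      rw [hS]
      exact Finset.mem_insert.mpr (Or.inr (Finset.mem_image_of_mem leaf (Finset.mem_univ i)))
    have hvS : v ∈ S := Finset.mem_insert_self _ _
    refine build_copy v leaf af bf se (fun j => es (idx j))
      hseH (fun j => hesH _) hsev hleafmem haf hbf hleafinj hleafv
      ?_ ?_ ?_ ?_ ?_ ?_ ?_ hseinj ?_ ?_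
    · intro j j' hjj
      by_contra hne
      have hdx := hdisj (idx j) (idx j') (fun h => hne (hidxinj h))
      rw [Finset.disjoint_left] at hdx
      exact hdx (haf j) (hjj ▸ haf j')
    · intro j j' hjj
      by_contra hne
      have hdx := hdisj (idx j) (idx j') (fun h => hne (hidxinj h))
      rw [Finset.disjoint_left] at hdx
      exact hdx (hbf j) (hjj ▸ hbf j')
    · intro j j' hjj
      rcases eq_or_ne j j' with rfl | hne
      · exact (hafbf j) hjj
      · have hdx := hdisj (idx j) (idx j') (fun h => hne (hidxinj h))
        rw [Finset.disjoint_left] at hdx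
        exact hdx (haf j) (hjj ▸ hbf j')
    · exact fun j h => hnotinS j _ (haf j) (h ▸ hvS)
    · exact fun j h => hnotinS j _ (hbf j) (h ▸ hvS)
    · exact fun j i h => hnotinS j _ (haf j) (h ▸ hleafS i)
    · exact fun j i h => hnotinS j _ (hbf j) (h ▸ hleafS i)
    · intro j j' h
      exact hidxinj (by by_contra hne; exact hesne _ _ (fun hh => hne hh) h)
    · intro i j h
      have h2 : se i = es (idx j) := h
      have hvj : v ∉ es (idx j) := fun hv => hnotinS j v hv hvS
      exact hvj (h2 ▸ hsev i)
  · -- C' nonempty: sunflower case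
    obtain ⟨u, hu⟩ := hC'ne
    set si : Fin ℓ → Fin w := fun i => ⟨i.val, by omega⟩ with hsi
    set mi : Fin (k-1) → Fin w := fun j => ⟨ℓ + j.val, by
      have := j.isLt
      omega⟩ with hmi
    have hsiinj : Function.Injective si := by
      intro i i' h
      have h1 := congrArg Fin.val h
      have h2 : (i : ℕ) = (i' : ℕ) := h1
      exact Fin.ext h2
    have hmiinj : Function.Injective mi := by
      intro j j' h
      have h1 := congrArg Fin.val h
      have h2 : ℓ + (j : ℕ) = ℓ + (j' : ℕ) := h1
      exact Fin.ext (by omega)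
    have hsmne : ∀ i j, si i ≠ mi j := by
      intro i j h
      have h1 := congrArg Fin.val h
      have h2 : (i : ℕ) = ℓ + (j : ℕ) := h1
      have := i.isLt
      omega
    set lp : Fin w → V := fun i => (hpet i).choose with hlp
    have hlpmem : ∀ i, lp i ∈ es i \ C' := fun i => (hpet i).choose_spec
    have hlpes : ∀ i, lp i ∈ es i := fun i => (Finset.mem_sdiff.mp (hlpmem i)).1
    have hlpC : ∀ i, lp i ∉ C' := fun i => (Finset.mem_sdiff.mp (hlpmem i)).2
    have hlpinj : ∀ i i', i ≠ i' → lp i ≠ lp i' := by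
      intro i i' hii h
      have hdx := hdisj i i' hii
      rw [Finset.disjoint_left] at hdx
      exact hdx (hlpmem i) (h ▸ hlpmem i')
    have hesinj2 : Function.Injective (fun i : Fin ℓ => es (si i)) := by
      intro i i' h
      by_contra hne
      exact hesne _ _ (fun hh => hne (hsiinj hh)) h
    have hmeinj2 : Function.Injective (fun j : Fin (k-1) => es (mi j)) := by
      intro j j' h
      by_contra hne
      exact hesne _ _ (fun hh => hne (hmiinj hh)) h
    have hsm2 : ∀ i j, es (si i) ≠ es (mi j) :=
      fun i j h => hesne _ _ (hsmne i j) h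
    rcases Nat.lt_or_ge C'.card k with hCk | hCk
    · -- small core: petals have ≥ 2 elements
      have hpet2 : ∀ x : Fin w, 1 < (es x \ C').card := by
        intro x
        have h1 : (es x).card - C'.card ≤ (es x \ C').card := Finset.le_card_sdiff _ _
        rw [hunif _ (hesH x)] at h1
        omega
      have hab2 : ∀ j : Fin (k-1), ∃ x ∈ es (mi j) \ C', ∃ y ∈ es (mi j) \ C', x ≠ y :=
        fun j => Finset.one_lt_card.mp (hpet2 (mi j))
      choose af haf bf hbf hafbf using hab2
      refine build_copy u (fun i => lp (si i)) af bf (fun i => es (si i)) (fun j => es (mi j))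
        (fun i => hesH _) (fun j => hesH _) (fun i => hC'es _ hu) (fun i => hlpes _)
        (fun j => (Finset.mem_sdiff.mp (haf j)).1) (fun j => (Finset.mem_sdiff.mp (hbf j)).1)
        ?_ ?_ ?_ ?_ ?_ ?_ ?_ ?_ ?_ hesinj2 hmeinj2 hsm2
      · intro i i' h
        by_contra hne
        exact hlpinj _ _ (fun hh => hne (hsiinj hh)) h
      · intro i h
        have h2 : lp (si i) = u := h
        exact (hlpC (si i)) (h2 ▸ hu)
      · intro j j' h
        rcases eq_or_ne j j' with rfl | hne
        · rfl
        · exfalso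
          have hdx := hdisj (mi j) (mi j') (fun hh => hne (hmiinj hh))
          rw [Finset.disjoint_left] at hdx
          exact hdx (haf j) (h ▸ haf j')
      · intro j j' h
        rcases eq_or_ne j j' with rfl | hne
        · rfl
        · exfalso
          have hdx := hdisj (mi j) (mi j') (fun hh => hne (hmiinj hh))
          rw [Finset.disjoint_left] at hdx
          exact hdx (hbf j) (h ▸ hbf j')
      · intro j j' h
        rcases eq_or_ne j j' with rfl | hne
        · exact (hafbf j) h
        · have hdx := hdisj (mi j) (mi j') (fun hh => hne (hmiinj hh))
          rw [Finset.disjoint_left] at hdx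
          exact hdx (haf j) (h ▸ hbf j')
      · exact fun j h => (Finset.mem_sdiff.mp (haf j)).2 (h ▸ hu)
      · exact fun j h => (Finset.mem_sdiff.mp (hbf j)).2 (h ▸ hu)
      · intro j i h
        have hdx := hdisj (mi j) (si i) (fun hh => (hsmne i j) hh.symm)
        rw [Finset.disjoint_left] at hdx
        exact hdx (haf j) (h ▸ hlpmem (si i))
      · intro j i h
        have hdx := hdisj (mi j) (si i) (fun hh => (hsmne i j) hh.symm)
        rw [Finset.disjoint_left] at hdx
        exact hdx (hbf j) (h ▸ hlpmem (si i))
    · -- big core: second matching vertices from the core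
      have hCerase : k - 1 ≤ (C'.erase u).card := by
        rw [Finset.card_erase_of_mem hu]
        omega
      obtain ⟨bf, hbfinj, hbfmem⟩ := exists_enum hCerase
      have hbfC : ∀ j, bf j ∈ C' := fun j => Finset.mem_of_mem_erase (hbfmem j)
      have hbfu : ∀ j, bf j ≠ u := fun j => Finset.ne_of_mem_erase (hbfmem j)
      refine build_copy u (fun i => lp (si i)) (fun j => lp (mi j)) bf
        (fun i => es (si i)) (fun j => es (mi j))
        (fun i => hesH _) (fun j => hesH _) (fun i => hC'es _ hu) (fun i => hlpes _)
        (fun j => hlpes _) (fun j => hC'es _ (hbfC j))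
        ?_ ?_ ?_ hbfinj ?_ ?_ hbfu ?_ ?_ hesinj2 hmeinj2 hsm2
      · intro i i' h
        by_contra hne
        exact hlpinj _ _ (fun hh => hne (hsiinj hh)) h
      · intro i h
        have h2 : lp (si i) = u := h
        exact (hlpC (si i)) (h2 ▸ hu)
      · intro j j' h
        by_contra hne
        exact hlpinj _ _ (fun hh => hne (hmiinj hh)) h
      · intro j j' h
        have h2 : lp (mi j) = bf j' := h
        exact (hlpC (mi j)) (h2 ▸ hbfC j')
      · intro j h
        have h2 : lp (mi j) = u := h
        exact (hlpC (mi j)) (h2 ▸ hu)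
      · intro j i h
        have h2 : lp (mi j) = lp (si i) := h
        exact hlpinj _ _ (hsmne i j).symm h2
      · intro j i h
        have h2 : bf j = lp (si i) := h
        exact (hlpC (si i)) ((h2.symm) ▸ hbfC j)


end BergeAux

open BergeAux in
theorem ex_berge_star_union_matching_small (ℓ k r : ℕ) (hl : 2 ≤ ℓ)
    (hk : 2 ≤ k) (hkr : k < r) (hlr : ℓ ≤ r + 1) :
    ∃ N, ∀ n ≥ N,
      exBerge r n ((starsG 1 ℓ).sum (matchingG (k - 1))) = n * (ℓ - 1) / r := by
  classical
  refine ⟨r * sunf (ℓ + k + r + 2) r r + r + 1, ?_⟩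
  intro n hn
  set w := ℓ + k + r + 2 with hwdef
  have hr : 0 < r := by omega
  have hs : 1 ≤ sunf w r r := sunf_pos w r r (by omega) hr
  have hrs : r ≤ r * sunf w r r := Nat.le_mul_of_pos_right r hs
  have hrn : r < n := by omega
  have hn0 : 0 < n := by omega
  have hd1 : 1 ≤ ℓ - 1 := by omega
  have hdr : ℓ - 1 ≤ r := by omega
  obtain ⟨Hc, hcunif, hccard, hcdeg⟩ := exists_good_H (d := ℓ - 1) hn0 hr hrn hdr
  have hcnocopy : ¬ IsBergeCopy ((starsG 1 ℓ).sum (matchingG (k-1))) Hc := by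
    intro hcopy
    obtain ⟨v, hv⟩ := copy_gives_deg (by omega) hcopy
    have := hcdeg v
    omega
  have hmem : n * (ℓ - 1) / r ∈ {m | ∃ H : Finset (Finset (Fin n)),
      (∀ e ∈ H, e.card = r) ∧ ¬ IsBergeCopy ((starsG 1 ℓ).sum (matchingG (k - 1))) H ∧
      H.card = m} := ⟨Hc, hcunif, hcnocopy, hccard⟩
  have hub : ∀ x ∈ {m | ∃ H : Finset (Finset (Fin n)),
      (∀ e ∈ H, e.card = r) ∧ ¬ IsBergeCopy ((starsG 1 ℓ).sum (matchingG (k - 1))) H ∧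
      H.card = m}, x ≤ n * (ℓ - 1) / r := by
    rintro x ⟨H, hunif, hnc, rfl⟩
    by_contra hbig
    push_neg at hbig
    have hsunf : sunf w r r ≤ H.card := by
      have h1 : sunf w r r * r ≤ n := by
        have : r * sunf w r r = sunf w r r * r := by ring
        omega
      have h2 : sunf w r r ≤ n / r := (Nat.le_div_iff_mul_le hr).mpr h1
      have h3 : n / r ≤ n * (ℓ - 1) / r :=
        Nat.div_le_div_right (Nat.le_mul_of_pos_right n (by omega))
      omega
    obtain ⟨v, hv⟩ := exists_big_degree hr hunif hbig
    have hvdeg : ℓ ≤ (H.filter (fun e => v ∈ e)).card := by omega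
    exact hnc (copy_of_big hl hk hkr hlr hunif hsunf ⟨v, hvdeg⟩)
  rw [exBerge]
  exact le_antisymm (csSup_le ⟨_, hmem⟩ hub) (le_csSup ⟨_, hub⟩ hmem)
end

section
/- Let ℓ > r + 1 and r > k ≥ 2 be integers. For sufficiently large n, ex_r(n, Berge-(S_ℓ ∪ M_{k-1})) ≤ (n/ℓ)·C(ℓ, r), and this bound is attained whenever ℓ divides n. -/
open Finset

lemma auxLeChoose (s m : ℕ) (h1 : 1 ≤ s) (h2 : s < m) : m ≤ m.choose s := by
  induction s generalizing m with
  | zero => omega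
  | succ t ih =>
    rcases Nat.eq_zero_or_pos t with rfl | ht
    · simp [Nat.choose_one_right]
    · obtain ⟨m', rfl⟩ : ∃ m', m = m' + 1 := ⟨m - 1, by omega⟩
      have h4 : m' ≤ m'.choose t := ih m' ht (by omega)
      have h5 : 1 ≤ m'.choose (t+1) := Nat.choose_pos (by omega)
      have h6 : (m' + 1).choose (t + 1) = m'.choose t + m'.choose (t+1) :=
        Nat.choose_succ_succ m' t
      omega

lemma auxChooseAdd (s u d : ℕ) (h1 : 1 ≤ s) (hs : s ≤ u) : u.choose s + d ≤ (u + d).choose s := by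
  induction d with
  | zero => simp
  | succ e ih =>
    obtain ⟨s', rfl⟩ : ∃ s', s = s' + 1 := ⟨s - 1, by omega⟩
    have h4 : 1 ≤ (u+e).choose s' := Nat.choose_pos (by omega)
    have h5 : (u + e + 1).choose (s' + 1) = (u+e).choose s' + (u+e).choose (s'+1) :=
      Nat.choose_succ_succ (u+e) s'
    have he : u + (e + 1) = u + e + 1 := by omega
    rw [he, h5]
    omega

lemma auxDefect (s u m : ℕ) (h1 : 1 ≤ s) (h2 : s + 1 ≤ m) (hu : u ≤ m) :
    u.choose s + (m - u) ≤ m.choose s := by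
  rcases le_or_gt s u with h | h
  · have h3 := auxChooseAdd s u (m - u) h1 h
    have h4 : u + (m - u) = m := by omega
    rw [h4] at h3; omega
  · have h3 : u.choose s = 0 := Nat.choose_eq_zero_of_lt h
    have h4 : m ≤ m.choose s := auxLeChoose s m h1 h2
    omega


lemma sum_edge_cases {ℓ t : ℕ} {e : Sym2 ((Fin 1 × Fin (ℓ+1)) ⊕ (Fin t × Fin 2))}
    (he : e ∈ ((starsG 1 ℓ).sum (matchingG t)).edgeSet) :
    (∃ i : Fin (ℓ+1), i ≠ 0 ∧ e = s(Sum.inl (0, i), Sum.inl (0, 0))) ∨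
    (∃ j : Fin t, e = s(Sum.inr (j, 0), Sum.inr (j, 1))) := by
  induction e using Sym2.ind with
  | _ a b =>
    rw [SimpleGraph.mem_edgeSet] at he
    have fin2 : ∀ i : Fin 2, i = 0 ∨ i = 1 := by decide
    rcases a with ⟨p1, p2⟩ | ⟨p1, p2⟩ <;> rcases b with ⟨q1, q2⟩ | ⟨q1, q2⟩ <;>
      simp only [SimpleGraph.sum_adj, starsG, matchingG, SimpleGraph.fromRel_adj] at he
    · -- star case
      left
      obtain ⟨hne, hor⟩ := he
      have hp1 : p1 = 0 := Subsingleton.elim _ _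
      have hq1 : q1 = 0 := Subsingleton.elim _ _
      subst hp1; subst hq1
      have hpq : p2 ≠ q2 := fun h => hne (by rw [h])
      rcases hor with ⟨-, h0⟩ | ⟨-, h0⟩
      · subst h0
        exact ⟨q2, fun h => hpq h.symm, Sym2.eq_swap⟩
      · subst h0
        exact ⟨p2, hpq, rfl⟩
    · -- matching case
      right
      obtain ⟨hne, hor⟩ := he
      have h1 : p1 = q1 := by tauto
      subst h1
      have hpq : p2 ≠ q2 := fun h => hne (by rw [h])
      rcases fin2 p2 with h2 | h2 <;> rcases fin2 q2 with h3 | h3 <;>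
          subst h2 <;> subst h3
      · exact absurd rfl hpq
      · exact ⟨p1, rfl⟩
      · exact ⟨p1, Sym2.eq_swap⟩
      · exact absurd rfl hpq

lemma star_edge_mem {ℓ t : ℕ} (i : Fin (ℓ+1)) (hi : i ≠ 0) :
    s(Sum.inl ((0 : Fin 1), i), Sum.inl ((0 : Fin 1), (0 : Fin (ℓ+1))))
      ∈ (((starsG 1 ℓ).sum (matchingG t)).edgeSet) := by
  rw [SimpleGraph.mem_edgeSet]
  simp only [SimpleGraph.sum_adj, starsG, SimpleGraph.fromRel_adj]
  simp [hi]

lemma matching_edge_mem {ℓ t : ℕ} (j : Fin t) :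
    s(Sum.inr (j, (0 : Fin 2)), (Sum.inr (j, 1) : (Fin 1 × Fin (ℓ+1)) ⊕ (Fin t × Fin 2)))
      ∈ (((starsG 1 ℓ).sum (matchingG t)).edgeSet) := by
  rw [SimpleGraph.mem_edgeSet]
  simp only [SimpleGraph.sum_adj, matchingG, SimpleGraph.fromRel_adj]
  simp

lemma buildCopy {V : Type*} [DecidableEq V] {H : Finset (Finset V)} {ℓ t : ℕ}
    (v : V) (es : Fin ℓ → Finset V) (xs : Fin ℓ → V)
    (gs : Fin t → Finset V) (ys zs : Fin t → V)
    (hesH : ∀ i, es i ∈ H) (hves : ∀ i, v ∈ es i) (hxes : ∀ i, xs i ∈ es i)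
    (hgsH : ∀ j, gs j ∈ H) (hgs_ne : ∀ j, gs j ∉ Set.range es)
    (hy : ∀ j, ys j ∈ gs j) (hz : ∀ j, zs j ∈ gs j)
    (hesi : Function.Injective es) (hgsi : Function.Injective gs)
    (hxsi : Function.Injective xs) (hysi : Function.Injective ys)
    (hzsi : Function.Injective zs)
    (hxv : ∀ i, xs i ≠ v) (hyv : ∀ j, ys j ≠ v) (hzv : ∀ j, zs j ≠ v)
    (hxy : ∀ i j, xs i ≠ ys j) (hxz : ∀ i j, xs i ≠ zs j)
    (hyz : ∀ j j', ys j ≠ zs j') :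
    IsBergeCopy ((starsG 1 ℓ).sum (matchingG t)) H := by
  classical
  set f : (Fin 1 × Fin (ℓ+1)) ⊕ (Fin t × Fin 2) → V := fun a =>
    match a with
    | Sum.inl p => if h : p.2 = 0 then v else xs (p.2.pred h)
    | Sum.inr q => if q.2 = 0 then ys q.1 else zs q.1 with hf
  set aux : (Fin 1 × Fin (ℓ+1)) ⊕ (Fin t × Fin 2) → Finset V := fun a =>
    match a with
    | Sum.inl p => if h : p.2 = 0 then ∅ else es (p.2.pred h)
    | Sum.inr q => gs q.1 with haux
  refine ⟨f, Sym2.lift ⟨fun a b => aux a ∪ aux b, fun a b => Finset.union_comm _ _⟩, ?_, ?_, ?_⟩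
  · -- injectivity of f
    intro a b hab
    have fin2 : ∀ i : Fin 2, i = 0 ∨ i = 1 := by decide
    rcases a with ⟨p1, p2⟩ | ⟨p1, p2⟩ <;> rcases b with ⟨q1, q2⟩ | ⟨q1, q2⟩
    · have hp1 : p1 = 0 := Subsingleton.elim _ _
      have hq1 : q1 = 0 := Subsingleton.elim _ _
      subst hp1; subst hq1
      by_cases h1 : p2 = 0 <;> by_cases h2 : q2 = 0
      · rw [h1, h2]
      · simp only [hf, dif_pos h1, dif_neg h2] at hab
        exact absurd hab.symm (hxv _)
      · simp only [hf, dif_neg h1, dif_pos h2] at hab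
        exact absurd hab (hxv _)
      · simp only [hf, dif_neg h1, dif_neg h2] at hab
        have h3 := hxsi hab
        rw [show p2 = (p2.pred h1).succ from (Fin.succ_pred _ _).symm,
          show q2 = (q2.pred h2).succ from (Fin.succ_pred _ _).symm, h3]
    · exfalso
      rcases fin2 q2 with h2 | h2 <;> subst h2
      · by_cases h1 : p2 = 0
        · simp only [hf, dif_pos h1, if_pos rfl] at hab
          exact (hyv _) hab.symm
        · simp only [hf, dif_neg h1, if_pos rfl] at hab
          exact (hxy _ _) hab
      · by_cases h1 : p2 = 0
        · simp only [hf, dif_pos h1,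
            if_neg (by decide : ¬ ((1 : Fin 2) = 0))] at hab
          exact (hzv _) hab.symm
        · simp only [hf, dif_neg h1,
            if_neg (by decide : ¬ ((1 : Fin 2) = 0))] at hab
          exact (hxz _ _) hab
    · exfalso
      rcases fin2 p2 with h1 | h1 <;> subst h1
      · by_cases h2 : q2 = 0
        · simp only [hf, dif_pos h2, if_pos rfl] at hab
          exact (hyv _) hab
        · simp only [hf, dif_neg h2, if_pos rfl] at hab
          exact (hxy _ _) hab.symm
      · by_cases h2 : q2 = 0
        · simp only [hf, dif_pos h2,
            if_neg (by decide : ¬ ((1 : Fin 2) = 0))] at hab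
          exact (hzv _) hab
        · simp only [hf, dif_neg h2,
            if_neg (by decide : ¬ ((1 : Fin 2) = 0))] at hab
          exact (hxz _ _) hab.symm
    · rcases fin2 p2 with h1 | h1 <;> rcases fin2 q2 with h2 | h2 <;>
        subst h1 <;> subst h2 <;>
        simp only [hf, if_pos rfl, if_neg (by decide : ¬ ((1 : Fin 2) = 0))] at hab
      · rw [hysi hab]
      · exact absurd hab (hyz _ _)
      · exact absurd hab.symm (hyz _ _)
      · rw [hzsi hab]
  · -- InjOn φ
    intro e1 h1 e2 h2 heq
    rcases sum_edge_cases h1 with ⟨i1, hi1, rfl⟩ | ⟨j1, rfl⟩ <;>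
      rcases sum_edge_cases h2 with ⟨i2, hi2, rfl⟩ | ⟨j2, rfl⟩
    · simp only [Sym2.lift_mk, haux, dif_neg hi1, dif_neg hi2, dif_pos rfl, dite_true, ite_true,
        Finset.union_empty] at heq
      have h3 : i1.pred hi1 = i2.pred hi2 := hesi heq
      rw [show i1 = (i1.pred hi1).succ from (Fin.succ_pred _ _).symm,
        show i2 = (i2.pred hi2).succ from (Fin.succ_pred _ _).symm, h3]
    · simp only [Sym2.lift_mk, haux, dif_neg hi1, dif_pos rfl, dite_true, ite_true,
        Finset.union_empty, Finset.union_self] at heq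
      exact absurd ⟨_, heq⟩ (hgs_ne j2)
    · simp only [Sym2.lift_mk, haux, dif_neg hi2, dif_pos rfl, dite_true, ite_true,
        Finset.union_empty, Finset.union_self] at heq
      exact absurd ⟨_, heq.symm⟩ (hgs_ne j1)
    · simp only [Sym2.lift_mk, haux, Finset.union_self] at heq
      rw [hgsi heq]
  · -- edges
    intro e he
    rcases sum_edge_cases he with ⟨i, hi, rfl⟩ | ⟨j, rfl⟩
    · simp only [Sym2.lift_mk, haux, dif_neg hi, dif_pos rfl, dite_true, ite_true, Finset.union_empty]
      refine ⟨hesH _, ?_⟩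
      intro x hx
      rw [Sym2.mem_iff] at hx
      rcases hx with rfl | rfl
      · simp only [hf, dif_neg hi]
        exact hxes _
      · simp only [hf, dif_pos rfl, dite_true, ite_true]
        exact hves _
    · simp only [Sym2.lift_mk, haux, Finset.union_self]
      refine ⟨hgsH _, ?_⟩
      intro x hx
      rw [Sym2.mem_iff] at hx
      rcases hx with rfl | rfl
      · simp only [hf, if_pos rfl]
        exact hy _
      · simp only [hf, if_neg (by decide : ¬ ((1 : Fin 2) = 0))]
        exact hz _

lemma codegreeLemma {V : Type*} [DecidableEq V] {H : Finset (Finset V)} {ℓ t r : ℕ}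
    (hr : ∀ e ∈ H, e.card = r) (htr : t + 2 ≤ r)
    (hfree : ¬ IsBergeCopy ((starsG 1 ℓ).sum (matchingG t)) H)
    (S : Finset V) (hS : S.card = r - 1) :
    (H.filter (fun e => S ⊆ e)).card < ℓ + t := by
  by_contra hcon
  push_neg at hcon
  obtain ⟨A', hA'sub, hA'card⟩ := Finset.exists_subset_card_eq hcon
  set E : Fin (ℓ + t) → Finset V :=
    fun i => (((A'.equivFinOfCardEq hA'card).symm i : { x // x ∈ A' }) : Finset V) with hE
  have hEinj : Function.Injective E := fun i j h => by
    have h2 : (A'.equivFinOfCardEq hA'card).symm i = (A'.equivFinOfCardEq hA'card).symm j :=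
      Subtype.coe_injective h
    exact (A'.equivFinOfCardEq hA'card).symm.injective h2
  have hEfil : ∀ i, E i ∈ H ∧ S ⊆ E i := fun i => by
    have h1 : (E i) ∈ A' := ((A'.equivFinOfCardEq hA'card).symm i).2
    have := hA'sub h1
    rw [Finset.mem_filter] at this
    exact this
  have hEcard : ∀ i, (E i).card = r := fun i => hr _ (hEfil i).1
  have hw' : ∀ i, ∃ a, E i \ S = {a} := fun i => by
    apply Finset.card_eq_one.mp
    rw [Finset.card_sdiff_of_subset (hEfil i).2, hEcard, hS]
    omega
  choose w hw using hw'
  have hwE : ∀ i, w i ∈ E i := fun i => by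
    have : w i ∈ E i \ S := by rw [hw i]; exact Finset.mem_singleton_self _
    exact (Finset.mem_sdiff.mp this).1
  have hwS : ∀ i, w i ∉ S := fun i => by
    have : w i ∈ E i \ S := by rw [hw i]; exact Finset.mem_singleton_self _
    exact (Finset.mem_sdiff.mp this).2
  have hEeq : ∀ i, E i = S ∪ {w i} := fun i => by
    have h1 := Finset.sdiff_union_of_subset (hEfil i).2
    rw [hw i] at h1
    rw [← h1, Finset.union_comm]
  have hwinj : Function.Injective w := fun i j h => by
    apply hEinj
    rw [hEeq i, hEeq j]
    rw [h]
  have hSne : S.Nonempty := Finset.card_pos.mp (by omega)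
  obtain ⟨v, hv⟩ := hSne
  have hScard : t ≤ (S.erase v).card := by
    rw [Finset.card_erase_of_mem hv, hS]; omega
  obtain ⟨C', hC'sub, hC'card⟩ := Finset.exists_subset_card_eq hScard
  set cs : Fin t → V :=
    fun j => (((C'.equivFinOfCardEq hC'card).symm j : { x // x ∈ C' }) : V) with hcs
  have hcsinj : Function.Injective cs := fun i j h => by
    have h2 : (C'.equivFinOfCardEq hC'card).symm i = (C'.equivFinOfCardEq hC'card).symm j :=
      Subtype.coe_injective h
    exact (C'.equivFinOfCardEq hC'card).symm.injective h2
  have hcsS : ∀ j, cs j ∈ S.erase v :=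
    fun j => hC'sub ((C'.equivFinOfCardEq hC'card).symm j).2
  have hcastinj : Function.Injective (fun i : Fin ℓ => Fin.castAdd t i) := by
    intro a b h
    have := congrArg Fin.val h
    simp only [Fin.coe_castAdd] at this
    exact Fin.ext this
  have hnatinj : Function.Injective (fun j : Fin t => Fin.natAdd ℓ j) := by
    intro a b h
    have := congrArg Fin.val h
    simp only [Fin.coe_natAdd] at this
    exact Fin.ext (by omega)
  apply hfree
  refine buildCopy v (fun i => E (Fin.castAdd t i)) (fun i => w (Fin.castAdd t i))
    (fun j => E (Fin.natAdd ℓ j)) (fun j => w (Fin.natAdd ℓ j)) cs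
    (fun i => (hEfil _).1) (fun i => (hEfil _).2 hv) (fun i => hwE _)
    (fun j => (hEfil _).1) ?_ (fun j => hwE _)
    (fun j => (hEfil _).2 (Finset.mem_of_mem_erase (hcsS j)))
    (fun i j h => hcastinj (hEinj h)) (fun i j h => hnatinj (hEinj h))
    (fun i j h => hcastinj (hwinj h)) (fun i j h => hnatinj (hwinj h)) hcsinj
    (fun i h => (hwS _) (h ▸ hv)) (fun j h => (hwS _) (h ▸ hv))
    (fun j => Finset.ne_of_mem_erase (hcsS j))
    ?_ (fun i j h => (hwS _) (h ▸ Finset.mem_of_mem_erase (hcsS j)))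
    (fun j j' h => (hwS _) (h ▸ Finset.mem_of_mem_erase (hcsS j')))
  · rintro j ⟨i, hij⟩
    have := hEinj hij
    have h2 := congrArg Fin.val this
    simp only [Fin.coe_castAdd, Fin.coe_natAdd] at h2
    have := (Fin.castAdd t i).isLt
    omega
  · intro i j h
    exact absurd (hwinj h) (by
      intro h2
      have h3 := congrArg Fin.val h2
      simp only [Fin.coe_castAdd, Fin.coe_natAdd] at h3
      have := (Fin.castAdd t i).isLt
      omega)

lemma noStarConfig {V : Type*} [DecidableEq V] {H : Finset (Finset V)} {ℓ t r : ℕ}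
    (hr : ∀ e ∈ H, e.card = r) (htr : t + 2 ≤ r)
    (hfree : ¬ IsBergeCopy ((starsG 1 ℓ).sum (matchingG t)) H)
    (hH : ((ℓ + 2*t + 1).choose (r-1)) * (ℓ + t) + (ℓ + t) < H.card)
    (v : V) (es : Fin ℓ → Finset V) (xs : Fin ℓ → V)
    (hesH : ∀ i, es i ∈ H) (hves : ∀ i, v ∈ es i) (hxes : ∀ i, xs i ∈ es i)
    (hesi : Function.Injective es) (hxsi : Function.Injective xs)
    (hxv : ∀ i, xs i ≠ v) : False := by
  classical
  have greedy : ∀ j, j ≤ t → ∃ (gs : Fin j → Finset V) (ys zs : Fin j → V),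
      (∀ i, gs i ∈ H) ∧ (∀ i, gs i ∉ Set.range es) ∧
      (∀ i, ys i ∈ gs i ∧ zs i ∈ gs i) ∧
      Function.Injective gs ∧ Function.Injective ys ∧ Function.Injective zs ∧
      (∀ i, ys i ≠ v ∧ zs i ≠ v) ∧
      (∀ i i', ys i ≠ xs i' ∧ zs i ≠ xs i') ∧
      (∀ i i', ys i ≠ zs i') := by
    intro j
    induction j with
    | zero =>
      intro _
      exact ⟨fun i => i.elim0, fun i => i.elim0, fun i => i.elim0,
        fun i => i.elim0, fun i => i.elim0, fun i => i.elim0,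
        fun a => a.elim0, fun a => a.elim0, fun a => a.elim0,
        fun i => i.elim0, fun i => i.elim0, fun i => i.elim0⟩
    | succ j ih =>
      intro hj
      obtain ⟨gs, ys, zs, hgsH, hgse, hyzg, hgsi, hysi, hzsi, hyzv, hyzx, hyz⟩ :=
        ih (by omega)
      set T : Finset V := insert v ((Finset.univ.image xs) ∪ (Finset.univ.image ys)
        ∪ (Finset.univ.image zs)) with hT
      have hTcard : T.card ≤ ℓ + 2 * t + 1 := by
        calc T.card ≤ ((Finset.univ.image xs) ∪ (Finset.univ.image ys)
            ∪ (Finset.univ.image zs)).card + 1 := Finset.card_insert_le _ _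
        _ ≤ (((Finset.univ.image xs) ∪ (Finset.univ.image ys)).card
            + (Finset.univ.image zs).card) + 1 := by
            have := Finset.card_union_le ((Finset.univ.image xs) ∪ (Finset.univ.image ys))
              (Finset.univ.image zs)
            omega
        _ ≤ (((Finset.univ.image xs).card + (Finset.univ.image ys).card)
            + (Finset.univ.image zs).card) + 1 := by
            have := Finset.card_union_le (Finset.univ.image xs) (Finset.univ.image ys)
            omega
        _ ≤ ℓ + 2 * t + 1 := by
            have h1 := Finset.card_image_le (s := (Finset.univ : Finset (Fin ℓ))) (f := xs)
            have h2 := Finset.card_image_le (s := (Finset.univ : Finset (Fin j))) (f := ys)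
            have h3 := Finset.card_image_le (s := (Finset.univ : Finset (Fin j))) (f := zs)
            simp only [Finset.card_univ, Fintype.card_fin] at h1 h2 h3
            omega
      set Bad : Finset (Finset V) := H.filter (fun g => r - 1 ≤ (g ∩ T).card) with hBad
      have hBadcard : Bad.card ≤ ((ℓ + 2*t + 1).choose (r-1)) * (ℓ + t) := by
        have hsub : Bad ⊆ (T.powersetCard (r-1)).biUnion
            (fun S => H.filter (fun e => S ⊆ e)) := by
          intro g hg
          rw [hBad, Finset.mem_filter] at hg
          obtain ⟨S, hS1, hS2⟩ := Finset.exists_subset_card_eq hg.2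
          rw [Finset.mem_biUnion]
          refine ⟨S, Finset.mem_powersetCard.mpr
            ⟨hS1.trans (Finset.inter_subset_right), hS2⟩, ?_⟩
          rw [Finset.mem_filter]
          exact ⟨hg.1, hS1.trans Finset.inter_subset_left⟩
        calc Bad.card ≤ _ := Finset.card_le_card hsub
        _ ≤ (T.powersetCard (r-1)).card * (ℓ + t) := by
            apply Finset.card_biUnion_le_card_mul
            intro S hS
            rw [Finset.mem_powersetCard] at hS
            exact le_of_lt (codegreeLemma hr htr hfree S hS.2)
        _ ≤ ((ℓ + 2*t + 1).choose (r-1)) * (ℓ + t) := by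
            apply Nat.mul_le_mul_right
            rw [Finset.card_powersetCard]
            exact Nat.choose_le_choose _ hTcard
      set Used : Finset (Finset V) := (Finset.univ.image es) ∪ (Finset.univ.image gs)
        with hUsed
      have hUsedcard : Used.card ≤ ℓ + t := by
        have h0 : Used.card ≤ (Finset.univ.image es).card + (Finset.univ.image gs).card :=
          Finset.card_union_le _ _
        have h1 := Finset.card_image_le (s := (Finset.univ : Finset (Fin ℓ))) (f := es)
        have h2 := Finset.card_image_le (s := (Finset.univ : Finset (Fin j))) (f := gs)
        simp only [Finset.card_univ, Fintype.card_fin] at h1 h2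
        omega
      have hnotsub : ¬ H ⊆ Bad ∪ Used := by
        intro hsub
        have h1 : H.card ≤ (Bad ∪ Used).card := Finset.card_le_card hsub
        have h2 : (Bad ∪ Used).card ≤ Bad.card + Used.card := Finset.card_union_le _ _
        omega
      obtain ⟨g, hgH, hgn⟩ := Finset.not_subset.mp hnotsub
      have hgBad : g ∉ Bad := fun h => hgn (Finset.mem_union_left _ h)
      have hgUsed : g ∉ Used := fun h => hgn (Finset.mem_union_right _ h)
      have hgInter : (g ∩ T).card < r - 1 := by
        by_contra h
        push_neg at h
        exact hgBad (by rw [hBad, Finset.mem_filter]; exact ⟨hgH, h⟩)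
      have hgsdiff : 1 < (g \ T).card := by
        have h1 := Finset.card_sdiff_add_card_inter g T
        have h2 := hr g hgH
        omega
      obtain ⟨y, hy, z, hz, hyne⟩ := Finset.one_lt_card.mp hgsdiff
      have hyg : y ∈ g := (Finset.mem_sdiff.mp hy).1
      have hzg : z ∈ g := (Finset.mem_sdiff.mp hz).1
      have hyT : y ∉ T := (Finset.mem_sdiff.mp hy).2
      have hzT : z ∉ T := (Finset.mem_sdiff.mp hz).2
      have hTv : v ∈ T := Finset.mem_insert_self _ _
      have hTx : ∀ i, xs i ∈ T := fun i => Finset.mem_insert_of_mem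
        (Finset.mem_union_left _ (Finset.mem_union_left _
          (Finset.mem_image_of_mem _ (Finset.mem_univ i))))
      have hTy : ∀ i, ys i ∈ T := fun i => Finset.mem_insert_of_mem
        (Finset.mem_union_left _ (Finset.mem_union_right _
          (Finset.mem_image_of_mem _ (Finset.mem_univ i))))
      have hTz : ∀ i, zs i ∈ T := fun i => Finset.mem_insert_of_mem
        (Finset.mem_union_right _ (Finset.mem_image_of_mem _ (Finset.mem_univ i)))
      have hges : g ∉ Set.range es := by
        rintro ⟨i, rfl⟩
        exact hgUsed (Finset.mem_union_left _
          (Finset.mem_image_of_mem _ (Finset.mem_univ i)))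
      have hggs : ∀ i, gs i ≠ g := by
        rintro i rfl
        exact hgUsed (Finset.mem_union_right _
          (Finset.mem_image_of_mem _ (Finset.mem_univ i)))
      refine ⟨Fin.snoc gs g, Fin.snoc ys y, Fin.snoc zs z, ?_, ?_, ?_, ?_, ?_, ?_, ?_, ?_, ?_⟩
      · intro i
        induction i using Fin.lastCases with
        | last => simpa using hgH
        | cast i => simpa using hgsH i
      · intro i
        induction i using Fin.lastCases with
        | last => simpa using hges
        | cast i => simpa using hgse i
      · intro i
        induction i using Fin.lastCases with
        | last => simp [hyg, hzg]
        | cast i => simpa using hyzg i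
      · intro a b hab
        induction a using Fin.lastCases with
        | last =>
          induction b using Fin.lastCases with
          | last => rfl
          | cast b => simp only [Fin.snoc_last, Fin.snoc_castSucc] at hab
                      exact absurd hab.symm (hggs b)
        | cast a =>
          induction b using Fin.lastCases with
          | last => simp only [Fin.snoc_last, Fin.snoc_castSucc] at hab
                    exact absurd hab (hggs a)
          | cast b => simp only [Fin.snoc_castSucc] at hab
                      rw [hgsi hab]
      · intro a b hab
        induction a using Fin.lastCases with
        | last =>
          induction b using Fin.lastCases with
          | last => rfl
          | cast b => simp only [Fin.snoc_last, Fin.snoc_castSucc] at hab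
                      exact absurd (hab ▸ hTy b) hyT
        | cast a =>
          induction b using Fin.lastCases with
          | last => simp only [Fin.snoc_last, Fin.snoc_castSucc] at hab
                    exact absurd (hab ▸ hTy a) hyT
          | cast b => simp only [Fin.snoc_castSucc] at hab
                      rw [hysi hab]
      · intro a b hab
        induction a using Fin.lastCases with
        | last =>
          induction b using Fin.lastCases with
          | last => rfl
          | cast b => simp only [Fin.snoc_last, Fin.snoc_castSucc] at hab
                      exact absurd (hab ▸ hTz b) hzT
        | cast a =>
          induction b using Fin.lastCases with
          | last => simp only [Fin.snoc_last, Fin.snoc_castSucc] at hab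
                    exact absurd (hab ▸ hTz a) hzT
          | cast b => simp only [Fin.snoc_castSucc] at hab
                      rw [hzsi hab]
      · intro i
        induction i using Fin.lastCases with
        | last =>
          simp only [Fin.snoc_last]
          exact ⟨fun h => hyT (h ▸ hTv), fun h => hzT (h ▸ hTv)⟩
        | cast i => simpa using hyzv i
      · intro i i'
        induction i using Fin.lastCases with
        | last =>
          simp only [Fin.snoc_last]
          exact ⟨fun h => hyT (h ▸ hTx i'), fun h => hzT (h ▸ hTx i')⟩
        | cast i => simpa using hyzx i i'
      · intro a b
        induction a using Fin.lastCases with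
        | last =>
          induction b using Fin.lastCases with
          | last => simp only [Fin.snoc_last]; exact hyne
          | cast b =>
            simp only [Fin.snoc_last, Fin.snoc_castSucc]
            exact fun h => hyT (h ▸ hTz b)
        | cast a =>
          induction b using Fin.lastCases with
          | last =>
            simp only [Fin.snoc_last, Fin.snoc_castSucc]
            exact fun h => hzT (h ▸ hTy a)
          | cast b =>
            simp only [Fin.snoc_castSucc]
            exact hyz a b
  obtain ⟨gs, ys, zs, hgsH, hgse, hyzg, hgsi, hysi, hzsi, hyzv, hyzx, hyz⟩ :=
    greedy t le_rfl
  exact hfree (buildCopy v es xs gs ys zs hesH hves hxes hgsH hgse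
    (fun j => (hyzg j).1) (fun j => (hyzg j).2) hesi hgsi hxsi hysi hzsi
    hxv (fun j => (hyzv j).1) (fun j => (hyzv j).2)
    (fun i j h => (hyzx j i).1 h.symm) (fun i j h => (hyzx j i).2 h.symm) hyz)

lemma degBound {V : Type*} [DecidableEq V] [Fintype V] {H : Finset (Finset V)} {ℓ r : ℕ}
    (hr : ∀ e ∈ H, e.card = r) (hr2 : 2 ≤ r) (hlr : r + 2 ≤ ℓ)
    (hnostar : ∀ (v : V) (es : Fin ℓ → Finset V) (xs : Fin ℓ → V),
      (∀ i, es i ∈ H) → (∀ i, v ∈ es i) → (∀ i, xs i ∈ es i) →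
      Function.Injective es → Function.Injective xs → (∀ i, xs i ≠ v) → False)
    (v : V) : (H.filter (fun e => v ∈ e)).card ≤ (ℓ-1).choose (r-1) := by
  classical
  by_contra hcon
  push_neg at hcon
  set A := H.filter (fun e => v ∈ e) with hA
  set d := A.card with hd
  have hCl : ℓ - 1 ≤ (ℓ-1).choose (r-1) := auxLeChoose (r-1) (ℓ-1) (by omega) (by omega)
  have hdl : ℓ ≤ d := by omega
  have hAH : ∀ e : {x // x ∈ A}, (e : Finset V) ∈ H ∧ v ∈ (e : Finset V) := fun e =>
    Finset.mem_filter.mp e.2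
  have hAcard : ∀ e : {x // x ∈ A}, (e : Finset V).card = r := fun e => hr _ (hAH e).1
  set t : {x // x ∈ A} → Finset (V ⊕ Fin (d - ℓ)) := fun e =>
    ((e : Finset V).erase v).image Sum.inl ∪ Finset.univ.image Sum.inr with ht
  have hall : ∀ s : Finset {x // x ∈ A}, s.card ≤ (s.biUnion t).card := by
    intro s
    rcases s.eq_empty_or_nonempty with rfl | hs
    · simp
    · set U := s.biUnion (fun e => ((e : Finset V).erase v)) with hU
      have key : s.biUnion t = U.image Sum.inl ∪ Finset.univ.image Sum.inr := by
        ext x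
        simp only [ht, hU, Finset.mem_biUnion, Finset.mem_union, Finset.mem_image]
        constructor
        · rintro ⟨e, he, (⟨y, hy, rfl⟩ | ⟨y, hy, rfl⟩)⟩
          · exact Or.inl ⟨y, ⟨e, he, hy⟩, rfl⟩
          · exact Or.inr ⟨y, hy, rfl⟩
        · rintro (⟨y, ⟨e, he, hy⟩, rfl⟩ | ⟨y, hy, rfl⟩)
          · exact ⟨e, he, Or.inl ⟨y, hy, rfl⟩⟩
          · exact ⟨hs.choose, hs.choose_spec, Or.inr ⟨y, hy, rfl⟩⟩
      have hdisj : Disjoint (U.image Sum.inl)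
          ((Finset.univ : Finset (Fin (d - ℓ))).image Sum.inr) := by
        rw [Finset.disjoint_left]
        rintro x hx1 hx2
        obtain ⟨y, _, rfl⟩ := Finset.mem_image.mp hx1
        obtain ⟨z, _, hz⟩ := Finset.mem_image.mp hx2
        exact Sum.inl_ne_inr hz.symm
      have hcard : (s.biUnion t).card = U.card + (d - ℓ) := by
        rw [key, Finset.card_union_of_disjoint hdisj,
          Finset.card_image_of_injective _ Sum.inl_injective,
          Finset.card_image_of_injective _ Sum.inr_injective,
          Finset.card_univ, Fintype.card_fin]
      rw [hcard]
      have hsd : s.card ≤ d := by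
        have h1 : s.card ≤ (Finset.univ : Finset {x // x ∈ A}).card :=
          Finset.card_le_univ s
        rwa [Finset.card_univ, Fintype.card_coe] at h1
      rcases le_or_gt ℓ U.card with h | h
      · omega
      · -- few vertices: count subsets
        have hsc : s.card ≤ U.card.choose (r-1) := by
          have hmap : ∀ e ∈ s, (e : Finset V).erase v ∈ U.powersetCard (r-1) := by
            intro e he
            rw [Finset.mem_powersetCard]
            constructor
            · intro x hx
              rw [hU, Finset.mem_biUnion]
              exact ⟨e, he, hx⟩
            · rw [Finset.card_erase_of_mem (hAH e).2, hAcard]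
          have hinj : Set.InjOn (fun e : {x // x ∈ A} => (e : Finset V).erase v) s := by
            intro e1 h1 e2 h2 hee
            have : (e1 : Finset V) = (e2 : Finset V) := by
              rw [← Finset.insert_erase (hAH e1).2, ← Finset.insert_erase (hAH e2).2]
              simp only at hee
              rw [hee]
            exact Subtype.coe_injective this
          have := Finset.card_le_card_of_injOn _ hmap hinj
          rwa [Finset.card_powersetCard] at this
        have hdef := auxDefect (r-1) U.card (ℓ-1) (by omega) (by omega) (by omega)
        omega
  obtain ⟨f, hfinj, hft⟩ := (Finset.all_card_le_biUnion_card_iff_exists_injective t).mp hall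
  set Good := Finset.univ.filter (fun e : {x // x ∈ A} => ∃ x : V, f e = Sum.inl x)
    with hGood
  have hBadcard : (Finset.univ.filter
      (fun e : {x // x ∈ A} => ¬ ∃ x : V, f e = Sum.inl x)).card ≤ d - ℓ := by
    set Bad := Finset.univ.filter
      (fun e : {x // x ∈ A} => ¬ ∃ x : V, f e = Sum.inl x) with hB
    have h1 : Bad.image f ⊆ (Finset.univ : Finset (Fin (d - ℓ))).image Sum.inr := by
      intro x hx
      obtain ⟨e, he, rfl⟩ := Finset.mem_image.mp hx
      rw [hB, Finset.mem_filter] at he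
      have h2 := hft e
      rw [ht] at h2
      rcases Finset.mem_union.mp h2 with h3 | h3
      · obtain ⟨y, _, hy⟩ := Finset.mem_image.mp h3
        exact absurd ⟨y, hy.symm⟩ he.2
      · exact h3
    have h2 := Finset.card_le_card h1
    rw [Finset.card_image_of_injective _ hfinj,
      Finset.card_image_of_injective _ Sum.inr_injective,
      Finset.card_univ, Fintype.card_fin] at h2
    exact h2
  have hGoodcard : ℓ ≤ Good.card := by
    have h1 : Good.card + (Finset.univ.filter
        (fun e : {x // x ∈ A} => ¬ ∃ x : V, f e = Sum.inl x)).card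
        = Fintype.card {x // x ∈ A} := by
      have h2 := Finset.card_filter_add_card_filter_not
        (s := (Finset.univ : Finset {x // x ∈ A}))
        (p := fun e => ∃ x : V, f e = Sum.inl x)
      rw [Finset.card_univ] at h2
      convert h2 using 3
    rw [Fintype.card_coe] at h1
    omega
  obtain ⟨G', hG'sub, hG'card⟩ := Finset.exists_subset_card_eq hGoodcard
  set E : Fin ℓ → {x // x ∈ A} :=
    fun i => ((G'.equivFinOfCardEq hG'card).symm i).1 with hE
  have hEinj : Function.Injective E := fun i j h => by
    exact (G'.equivFinOfCardEq hG'card).symm.injective (Subtype.coe_injective h)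
  have hEGood : ∀ i, E i ∈ Good := fun i => hG'sub ((G'.equivFinOfCardEq hG'card).symm i).2
  have hxs0 : ∀ i, ∃ x : V, f (E i) = Sum.inl x := fun i =>
    (Finset.mem_filter.mp (hEGood i)).2
  choose xs hxs using hxs0
  have hxse : ∀ i, xs i ∈ ((E i : {x // x ∈ A}) : Finset V).erase v := by
    intro i
    have h2 := hft (E i)
    rw [ht] at h2
    rcases Finset.mem_union.mp h2 with h3 | h3
    · obtain ⟨y, hy, hy2⟩ := Finset.mem_image.mp h3
      rw [hxs i] at hy2
      rwa [Sum.inl_injective hy2] at hy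
    · obtain ⟨y, _, hy2⟩ := Finset.mem_image.mp h3
      rw [hxs i] at hy2
      exact absurd hy2 (Sum.inr_ne_inl)
  refine hnostar v (fun i => ((E i : {x // x ∈ A}) : Finset V)) xs
    (fun i => (hAH (E i)).1) (fun i => (hAH (E i)).2)
    (fun i => Finset.mem_of_mem_erase (hxse i))
    (fun i j h => hEinj (Subtype.coe_injective h))
    (fun i j h => ?_) (fun i => Finset.ne_of_mem_erase (hxse i))
  have h2 : f (E i) = f (E j) := by rw [hxs i, hxs j, h]
  exact hEinj (hfinj h2)

lemma mainUpper {n ℓ t r : ℕ} (hr2 : 2 ≤ r) (htr : t + 2 ≤ r) (hlr : r + 2 ≤ ℓ)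
    {H : Finset (Finset (Fin n))} (hr : ∀ e ∈ H, e.card = r)
    (hfree : ¬ IsBergeCopy ((starsG 1 ℓ).sum (matchingG t)) H)
    (hn : ℓ * (((ℓ + 2*t + 1).choose (r-1)) * (ℓ + t) + (ℓ + t) + 1) ≤ n) :
    H.card * ℓ ≤ n * ℓ.choose r := by
  classical
  set B := ((ℓ + 2*t + 1).choose (r-1)) * (ℓ + t) + (ℓ + t) with hB
  have hchoosepos : 1 ≤ ℓ.choose r := Nat.choose_pos (by omega)
  rcases le_or_gt H.card B with hle | hgt
  · calc H.card * ℓ ≤ B * ℓ := Nat.mul_le_mul_right _ hle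
    _ = ℓ * B := Nat.mul_comm _ _
    _ ≤ ℓ * (B + 1) := Nat.mul_le_mul_left _ (by omega)
    _ ≤ n := hn
    _ = n * 1 := (Nat.mul_one n).symm
    _ ≤ n * ℓ.choose r := Nat.mul_le_mul_left _ hchoosepos
  · have hnostar : ∀ (v : Fin n) (es : Fin ℓ → Finset (Fin n)) (xs : Fin ℓ → Fin n),
        (∀ i, es i ∈ H) → (∀ i, v ∈ es i) → (∀ i, xs i ∈ es i) →
        Function.Injective es → Function.Injective xs → (∀ i, xs i ≠ v) → False := by
      intro v es xs h1 h2 h3 h4 h5 h6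
      exact noStarConfig hr htr hfree (by omega) v es xs h1 h2 h3 h4 h5 h6
    have hdeg : ∀ v : Fin n, (H.filter (fun e => v ∈ e)).card ≤ (ℓ-1).choose (r-1) :=
      degBound hr hr2 hlr hnostar
    have hsum : ∑ v : Fin n, (H.filter (fun e => v ∈ e)).card = ∑ e ∈ H, e.card := by
      calc ∑ v ∈ Finset.univ, (H.filter (fun e => v ∈ e)).card
          = ∑ v ∈ Finset.univ, ∑ e ∈ H, if v ∈ e then 1 else 0 := by
            refine Finset.sum_congr rfl fun v _ => ?_
            rw [Finset.card_filter]
        _ = ∑ e ∈ H, ∑ v ∈ Finset.univ, if v ∈ e then 1 else 0 := Finset.sum_comm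
        _ = ∑ e ∈ H, e.card := by
            refine Finset.sum_congr rfl fun e _ => ?_
            rw [← Finset.card_filter]
            congr 1
            ext x
            simp
    have hsum2 : ∑ e ∈ H, e.card = H.card * r := by
      rw [Finset.sum_congr rfl hr, Finset.sum_const, smul_eq_mul]
    have hkey : H.card * r ≤ n * ((ℓ-1).choose (r-1)) := by
      rw [← hsum2, ← hsum]
      calc ∑ v : Fin n, (H.filter (fun e => v ∈ e)).card
          ≤ ∑ _v : Fin n, (ℓ-1).choose (r-1) := Finset.sum_le_sum fun v _ => hdeg v
        _ = n * ((ℓ-1).choose (r-1)) := by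
            rw [Finset.sum_const, smul_eq_mul, Finset.card_univ, Fintype.card_fin]
    have hid : ℓ * ((ℓ-1).choose (r-1)) = ℓ.choose r * r := by
      have h1 := Nat.add_one_mul_choose_eq (ℓ-1) (r-1)
      have h2 : ℓ - 1 + 1 = ℓ := by omega
      have h3 : r - 1 + 1 = r := by omega
      rw [h2, h3] at h1
      exact h1
    have hfin : (H.card * ℓ) * r ≤ (n * ℓ.choose r) * r := by
      calc (H.card * ℓ) * r = (H.card * r) * ℓ := by ring
        _ ≤ (n * ((ℓ-1).choose (r-1))) * ℓ := Nat.mul_le_mul_right _ hkey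
        _ = n * (ℓ * ((ℓ-1).choose (r-1))) := by ring
        _ = n * (ℓ.choose r * r) := by rw [hid]
        _ = (n * ℓ.choose r) * r := by ring
    exact Nat.le_of_mul_le_mul_right hfin (by omega)

lemma blockCard {n ℓ : ℕ} (hl : 1 ≤ ℓ) (hdvd : ℓ ∣ n) {b : ℕ} (hb : b < n / ℓ) :
    (Finset.univ.filter (fun v : Fin n => (v : ℕ) / ℓ = b)).card = ℓ := by
  have hbn : (b + 1) * ℓ ≤ n := by
    obtain ⟨c, rfl⟩ := hdvd
    rw [Nat.mul_div_cancel_left c (by omega)] at hb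
    calc (b+1) * ℓ = ℓ * (b+1) := Nat.mul_comm _ _
    _ ≤ ℓ * c := Nat.mul_le_mul_left _ (by omega)
  have h1 : (Finset.univ.filter (fun v : Fin n => (v : ℕ) / ℓ = b)).card
      = ((Finset.range n).filter (fun x => x / ℓ = b)).card := by
    apply Finset.card_bij (fun (v : Fin n) _ => (v : ℕ))
    · intro a ha
      rw [Finset.mem_filter] at ha ⊢
      exact ⟨Finset.mem_range.mpr a.isLt, ha.2⟩
    · intro a _ c _ h
      exact Fin.ext h
    · intro x hx
      rw [Finset.mem_filter, Finset.mem_range] at hx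
      exact ⟨⟨x, hx.1⟩, Finset.mem_filter.mpr ⟨Finset.mem_univ _, hx.2⟩, rfl⟩
  rw [h1]
  have h2 : (Finset.range n).filter (fun x => x / ℓ = b) = Finset.Ico (b*ℓ) (b*ℓ + ℓ) := by
    ext x
    rw [Finset.mem_filter, Finset.mem_range, Finset.mem_Ico]
    constructor
    · rintro ⟨hxn, rfl⟩
      refine ⟨Nat.div_mul_le_self x ℓ, ?_⟩
      have h3 : x < (x / ℓ + 1) * ℓ := by
        have := Nat.lt_mul_div_succ x (show 0 < ℓ by omega)
        calc x < ℓ * (x / ℓ + 1) := this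
          _ = (x / ℓ + 1) * ℓ := Nat.mul_comm _ _
      calc x < (x / ℓ + 1) * ℓ := h3
        _ = x / ℓ * ℓ + ℓ := by ring
    · rintro ⟨hlo, hhi⟩
      have hxn : x < n := lt_of_lt_of_le (by calc x < b*ℓ + ℓ := hhi
        _ = (b+1) * ℓ := by ring) hbn
      refine ⟨hxn, Nat.div_eq_of_lt_le hlo (by calc x < b * ℓ + ℓ := hhi
        _ = (b+1) * ℓ := by ring)⟩
  rw [h2, Nat.card_Ico]
  omega

lemma lowerConstr {n ℓ t r : ℕ} (hl : 1 ≤ ℓ) (hr1 : 1 ≤ r) (hdvd : ℓ ∣ n) :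
    ∃ H : Finset (Finset (Fin n)), (∀ e ∈ H, e.card = r) ∧
      ¬ IsBergeCopy ((starsG 1 ℓ).sum (matchingG t)) H ∧
      H.card = (n / ℓ) * ℓ.choose r := by
  classical
  set block : ℕ → Finset (Fin n) :=
    fun b => Finset.univ.filter (fun v : Fin n => (v : ℕ) / ℓ = b) with hblock
  set H : Finset (Finset (Fin n)) :=
    (Finset.range (n / ℓ)).biUnion (fun b => (block b).powersetCard r) with hH
  have hmem : ∀ e ∈ H, ∃ b, e ⊆ block b ∧ e.card = r := by
    intro e he
    rw [hH, Finset.mem_biUnion] at he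
    obtain ⟨b, _, hb2⟩ := he
    rw [Finset.mem_powersetCard] at hb2
    exact ⟨b, hb2.1, hb2.2⟩
  have huni : ∀ e ∈ H, e.card = r := fun e he => (hmem e he).choose_spec.2
  refine ⟨H, huni, ?_, ?_⟩
  · -- Berge-free
    rintro ⟨f, φ, hfinj, hφinj, hedge⟩
    set c0 : (Fin 1 × Fin (ℓ+1)) ⊕ (Fin t × Fin 2) := Sum.inl (0, 0) with hc0
    set v := f c0 with hv
    have hblk : ∀ (i : Fin ℓ),
        (f (Sum.inl (0, i.succ)) : Fin n) ∈ block ((v : ℕ) / ℓ) := by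
      intro i
      have hedgemem := star_edge_mem (t := t) i.succ (Fin.succ_ne_zero i)
      obtain ⟨hφH, hφmem⟩ := hedge _ hedgemem
      obtain ⟨b, hb1, _⟩ := hmem _ hφH
      have hvin : v ∈ φ s(Sum.inl ((0:Fin 1), i.succ), c0) :=
        hφmem c0 (Sym2.mem_mk_right _ _)
      have hxin : f (Sum.inl (0, i.succ)) ∈ φ s(Sum.inl ((0:Fin 1), i.succ), c0) :=
        hφmem _ (Sym2.mem_mk_left _ _)
      have hb2 : (v : ℕ) / ℓ = b := by
        have := hb1 hvin
        rw [hblock, Finset.mem_filter] at this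
        exact this.2
      have := hb1 hxin
      rw [hblock, Finset.mem_filter] at this ⊢
      exact ⟨Finset.mem_univ _, by rw [this.2, hb2]⟩
    set s : Finset (Fin n) :=
      insert v (Finset.univ.image (fun i : Fin ℓ => f (Sum.inl (0, i.succ)))) with hs
    have hscard : s.card = ℓ + 1 := by
      rw [hs, Finset.card_insert_of_notMem, Finset.card_image_of_injective,
        Finset.card_univ, Fintype.card_fin]
      · intro a b hab
        have := hfinj hab
        have h2 := congrArg (fun x => Prod.snd (x.getLeft?.getD (0,0))) this
        exact Fin.succ_injective _ (by simpa using h2)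
      · intro hmem2
        obtain ⟨i, _, hi⟩ := Finset.mem_image.mp hmem2
        have := hfinj hi
        rw [hc0] at this
        have h2 := congrArg (fun x => Prod.snd (x.getLeft?.getD (0,0))) this
        exact Fin.succ_ne_zero i (by simpa using h2)
    have hsub : s ⊆ block ((v : ℕ) / ℓ) := by
      rw [hs]
      intro x hx
      rcases Finset.mem_insert.mp hx with rfl | hx2
      · rw [hblock, Finset.mem_filter]
        exact ⟨Finset.mem_univ _, rfl⟩
      · obtain ⟨i, _, rfl⟩ := Finset.mem_image.mp hx2
        exact hblk i
    have hbcard : (block ((v : ℕ) / ℓ)).card = ℓ := by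
      apply blockCard hl hdvd
      have hvn : (v : ℕ) < n := v.isLt
      have h3 : n / ℓ * ℓ = n := Nat.div_mul_cancel hdvd
      have h2 : (v:ℕ) / ℓ * ℓ ≤ (v:ℕ) := Nat.div_mul_le_self _ _
      by_contra hcon
      push_neg at hcon
      have h4 : n / ℓ * ℓ ≤ (v:ℕ) / ℓ * ℓ := Nat.mul_le_mul_right _ hcon
      omega
    have := Finset.card_le_card hsub
    omega
  · -- cardinality
    rw [hH, Finset.card_biUnion]
    · have hsum : ∀ b ∈ Finset.range (n / ℓ), ((block b).powersetCard r).card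
          = ℓ.choose r := by
        intro b hb
        rw [Finset.card_powersetCard, blockCard hl hdvd (Finset.mem_range.mp hb)]
      rw [Finset.sum_congr rfl hsum, Finset.sum_const, smul_eq_mul, Finset.card_range]
    · intro b1 h1 b2 h2 hne
      rw [Function.onFun, Finset.disjoint_left]
      intro e he1 he2
      rw [Finset.mem_powersetCard] at he1 he2
      have hepos : 0 < e.card := by omega
      obtain ⟨x, hx⟩ := Finset.card_pos.mp hepos
      have hb1 := he1.1 hx
      have hb2 := he2.1 hx
      rw [hblock, Finset.mem_filter] at hb1 hb2
      exact hne (hb1.2 ▸ hb2.2)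


theorem ex_berge_star_union_matching_large (ℓ k r : ℕ) (hk : 2 ≤ k)
    (hkr : k < r) (hlr : r + 1 < ℓ) :
    ∃ N, ∀ n ≥ N,
      exBerge r n ((starsG 1 ℓ).sum (matchingG (k - 1))) * ℓ ≤ n * ℓ.choose r ∧
      (ℓ ∣ n →
        exBerge r n ((starsG 1 ℓ).sum (matchingG (k - 1))) = (n / ℓ) * ℓ.choose r) := by
  classical
  set t := k - 1 with ht
  refine ⟨ℓ * (((ℓ + 2*t + 1).choose (r-1)) * (ℓ + t) + (ℓ + t) + 1), ?_⟩
  intro n hn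
  set F := (starsG 1 ℓ).sum (matchingG t) with hF
  set S : Set ℕ := {m | ∃ H : Finset (Finset (Fin n)),
    (∀ e ∈ H, e.card = r) ∧ ¬ IsBergeCopy F H ∧ H.card = m} with hS
  have hone : ((⟨1, by omega⟩ : Fin (ℓ+1)) ≠ 0) := by
    intro h
    have := congrArg Fin.val h
    simp at this
  have hSne : S.Nonempty := by
    refine ⟨0, ∅, fun e he => absurd he (Finset.notMem_empty _), ?_, rfl⟩
    rintro ⟨f, φ, -, -, hedge⟩
    exact absurd (hedge _ (star_edge_mem (t := t) ⟨1, by omega⟩ hone)).1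
      (Finset.notMem_empty _)
  have hSbdd : BddAbove S := by
    refine ⟨Fintype.card (Finset (Fin n)), ?_⟩
    rintro m ⟨H, -, -, rfl⟩
    calc H.card ≤ (Finset.univ : Finset (Finset (Fin n))).card := Finset.card_le_univ H
    _ = Fintype.card (Finset (Fin n)) := Finset.card_univ
  have hmem : ∃ H : Finset (Finset (Fin n)), (∀ e ∈ H, e.card = r) ∧
      ¬ IsBergeCopy F H ∧ H.card = exBerge r n F := Nat.sSup_mem hSne hSbdd
  obtain ⟨H, hH1, hH2, hH3⟩ := hmem
  have hupper : exBerge r n F * ℓ ≤ n * ℓ.choose r := by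
    rw [← hH3]
    exact mainUpper (by omega) (by omega) (by omega) hH1 hH2 hn
  refine ⟨hupper, ?_⟩
  intro hdvd
  apply le_antisymm
  · have h0 : n / ℓ * ℓ = n := Nat.div_mul_cancel hdvd
    have h2 : ((n / ℓ) * ℓ.choose r) * ℓ = n * ℓ.choose r := by
      calc ((n / ℓ) * ℓ.choose r) * ℓ = (n / ℓ * ℓ) * ℓ.choose r := by ring
      _ = n * ℓ.choose r := by rw [h0]
    rw [← h2] at hupper
    exact Nat.le_of_mul_le_mul_right hupper (by omega)
  · obtain ⟨H₀, h1, h2, h3⟩ :=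
      lowerConstr (n := n) (ℓ := ℓ) (t := t) (r := r) (by omega) (by omega) hdvd
    exact le_csSup hSbdd ⟨H₀, h1, h2, h3⟩
end

section
/- Fix integers k ≥ 1 and r ≥ 2k - 1. For sufficiently large n, the maximum number of hyperedges in an n-vertex r-uniform hypergraph containing no Berge matching of size k equals k - 1. -/
open Finset

lemma matchingG_edge_mem (k : ℕ) (i : Fin k) :
    s((i, (0 : Fin 2)), (i, (1 : Fin 2))) ∈ (matchingG k).edgeSet := by
  rw [SimpleGraph.mem_edgeSet, matchingG, SimpleGraph.fromRel_adj]
  exact ⟨by simp [Prod.ext_iff], Or.inl rfl⟩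

/-- A hypergraph with fewer than `k` edges has no Berge matching of size `k`. -/
lemma no_berge_of_card_lt {n k : ℕ} (H : Finset (Finset (Fin n))) (hH : H.card < k) :
    ¬ IsBergeCopy (matchingG k) H := by
  rintro ⟨f, φ, hf, hinj, hmem⟩
  set g : Fin k → Finset (Fin n) := fun i => φ s((i, (0 : Fin 2)), (i, (1 : Fin 2))) with hg
  have hginj : Function.Injective g := by
    intro i j hij
    have := hinj (matchingG_edge_mem k i) (matchingG_edge_mem k j) hij
    rw [Sym2.eq_iff] at this
    rcases this with ⟨h1, _⟩ | ⟨h1, _⟩ <;> exact (Prod.ext_iff.mp h1).1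
  have hsub : (univ : Finset (Fin k)).image g ⊆ H := by
    intro x hx
    simp only [mem_image] at hx
    obtain ⟨i, _, rfl⟩ := hx
    exact (hmem _ (matchingG_edge_mem k i)).1
  have := card_le_card hsub
  rw [card_image_of_injective _ hginj, card_univ, Fintype.card_fin] at this
  omega

/-- Key upper bound: a Berge-matching-free uniform hypergraph has at most `k-1` edges. -/
lemma berge_upper {n k r : ℕ} (hk : 1 ≤ k) (hr2 : 2 ≤ r) (hr : 2 * k - 1 ≤ r)
    (H : Finset (Finset (Fin n))) (hunif : ∀ e ∈ H, e.card = r)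
    (hfree : ¬ IsBergeCopy (matchingG k) H) : H.card ≤ k - 1 := by
  by_contra hc
  push_neg at hc
  have hkH : k ≤ H.card := by omega
  obtain ⟨t, htH, htc⟩ := Finset.exists_subset_card_eq hkH
  set E : Fin k → Finset (Fin n) :=
    fun i => ((Finset.equivFinOfCardEq htc).symm i : Finset (Fin n)) with hE
  have hEinj : Function.Injective E := by
    intro i j hij
    exact (Finset.equivFinOfCardEq htc).symm.injective (Subtype.ext hij)
  have hEmem : ∀ i, E i ∈ H := fun i => htH ((Finset.equivFinOfCardEq htc).symm i).2
  have hEcard : ∀ i, (E i).card = r := fun i => hunif _ (hEmem i)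
  -- Hall's condition
  have hall : ∀ s : Finset (Fin k × Fin 2), s.card ≤ (s.biUnion fun x => E x.1).card := by
    intro s
    set I : Finset (Fin k) := s.image Prod.fst with hI
    have hsub : s ⊆ I ×ˢ (univ : Finset (Fin 2)) := by
      intro x hx
      rw [mem_product]
      exact ⟨mem_image_of_mem _ hx, mem_univ _⟩
    have hscard : s.card ≤ 2 * I.card := by
      have := card_le_card hsub
      rw [card_product, card_univ, Fintype.card_fin] at this
      omega
    have hEsub : ∀ i ∈ I, E i ⊆ s.biUnion fun x => E x.1 := by
      intro i hi
      rw [hI, mem_image] at hi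
      obtain ⟨x, hx, rfl⟩ := hi
      exact subset_biUnion_of_mem (fun x => E x.1) hx
    rcases Nat.lt_or_ge I.card 2 with hIc | hIc
    · rcases Nat.eq_zero_or_pos I.card with h0 | h1
      · have : s = ∅ := by
          by_contra hs
          obtain ⟨x, hx⟩ := nonempty_iff_ne_empty.mpr hs
          have : x.1 ∈ I := mem_image_of_mem _ hx
          simp [card_eq_zero.mp h0] at this
        simp [this]
      · obtain ⟨i, hi⟩ := card_pos.mp h1
        have hle : (E i).card ≤ (s.biUnion fun x => E x.1).card := card_le_card (hEsub i hi)
        have := hEcard i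
        omega
    · obtain ⟨i, hi, j, hj, hij⟩ := one_lt_card.mp hIc
      have hEij : E i ≠ E j := fun h => hij (hEinj h)
      have hinter : (E i ∩ E j).card < r := by
        rcases Nat.lt_or_ge (E i ∩ E j).card r with h | h
        · exact h
        · exfalso
          have h1 : E i ∩ E j = E i :=
            eq_of_subset_of_card_le inter_subset_left (by rw [hEcard i]; exact h)
          have h2 : E i ∩ E j = E j :=
            eq_of_subset_of_card_le inter_subset_right (by rw [hEcard j]; exact h)
          exact hEij (h1.symm.trans h2)
      have huni := Finset.card_union_add_card_inter (E i) (E j)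
      have hci := hEcard i
      have hcj := hEcard j
      have hsub2 : E i ∪ E j ⊆ s.biUnion fun x => E x.1 :=
        union_subset (hEsub i hi) (hEsub j hj)
      have hle2 := card_le_card hsub2
      have hIk : I.card ≤ k := by
        have := card_le_card (subset_univ I)
        rwa [card_univ, Fintype.card_fin] at this
      omega
  obtain ⟨f, hf, hfmem⟩ :=
    (Finset.all_card_le_biUnion_card_iff_exists_injective fun x : Fin k × Fin 2 => E x.1).mp hall
  apply hfree
  refine ⟨f, Sym2.lift ⟨fun x y => E (min x.1 y.1), fun x y => congrArg E (min_comm _ _)⟩,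
    hf, ?_, ?_⟩
  · intro z hz w hw hzw
    induction z using Sym2.ind with | _ a b =>
    induction w using Sym2.ind with | _ c d =>
    rw [SimpleGraph.mem_edgeSet, matchingG, SimpleGraph.fromRel_adj] at hz hw
    obtain ⟨hab, hab1⟩ := hz
    obtain ⟨hcd, hcd1⟩ := hw
    have hab1 : a.1 = b.1 := by tauto
    have hcd1 : c.1 = d.1 := by tauto
    simp only [Sym2.lift_mk] at hzw
    have hac : a.1 = c.1 := by
      apply hEinj
      have h1 : min a.1 b.1 = a.1 := by rw [hab1, min_self]
      have h2 : min c.1 d.1 = c.1 := by rw [hcd1, min_self]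
      rwa [h1, h2] at hzw
    have hab2 : a.2 ≠ b.2 := fun h => hab (Prod.ext hab1 h)
    have hcd2 : c.2 ≠ d.2 := fun h => hcd (Prod.ext hcd1 h)
    rw [Sym2.eq_iff]
    rcases (by omega : (a.2 = 0 ∧ b.2 = 1) ∨ (a.2 = 1 ∧ b.2 = 0)) with ⟨ha, hb⟩ | ⟨ha, hb⟩ <;>
    rcases (by omega : (c.2 = 0 ∧ d.2 = 1) ∨ (c.2 = 1 ∧ d.2 = 0)) with ⟨hc, hd⟩ | ⟨hc, hd⟩
    · exact Or.inl ⟨Prod.ext hac (ha.trans hc.symm),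
        Prod.ext (hab1.symm.trans (hac.trans hcd1)) (hb.trans hd.symm)⟩
    · exact Or.inr ⟨Prod.ext (hac.trans hcd1) (ha.trans hd.symm),
        Prod.ext (hab1.symm.trans hac) (hb.trans hc.symm)⟩
    · exact Or.inr ⟨Prod.ext (hac.trans hcd1) (ha.trans hd.symm),
        Prod.ext (hab1.symm.trans hac) (hb.trans hc.symm)⟩
    · exact Or.inl ⟨Prod.ext hac (ha.trans hc.symm),
        Prod.ext (hab1.symm.trans (hac.trans hcd1)) (hb.trans hd.symm)⟩
  · intro z hz
    induction z using Sym2.ind with | _ a b =>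
    rw [SimpleGraph.mem_edgeSet, matchingG, SimpleGraph.fromRel_adj] at hz
    obtain ⟨hab, hab1⟩ := hz
    have hab1 : a.1 = b.1 := by tauto
    simp only [Sym2.lift_mk]
    have hmin : min a.1 b.1 = a.1 := by rw [hab1, min_self]
    rw [hmin]
    refine ⟨hEmem a.1, ?_⟩
    intro x hx
    rw [Sym2.mem_iff] at hx
    rcases hx with rfl | rfl
    · exact hfmem x
    · rw [hab1]; exact hfmem x

theorem ex_berge_matching_very_large_r (k r : ℕ) (hk : 1 ≤ k)
    (hr2 : 2 ≤ r) (hr : 2 * k - 1 ≤ r) :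
    ∃ N, ∀ n ≥ N, exBerge r n (matchingG k) = k - 1 := by
  refine ⟨r + k, fun n hn => ?_⟩
  -- construction: k-1 intervals of length r
  have hcon : ∃ H : Finset (Finset (Fin n)),
      (∀ e ∈ H, e.card = r) ∧ ¬ IsBergeCopy (matchingG k) H ∧ H.card = k - 1 := by
    set Ed : ℕ → Finset (Fin n) := fun i =>
      ((Finset.Ico i (i + r)).filter (· < n)).attachFin
        (fun m hm => (mem_filter.mp hm).2) with hEd
    have hfil : ∀ i : ℕ, i + r ≤ n →
        (Finset.Ico i (i + r)).filter (· < n) = Finset.Ico i (i + r) := by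
      intro i hi
      apply filter_true_of_mem
      intro m hm
      rw [Finset.mem_Ico] at hm
      omega
    have hEdmem : ∀ (i : ℕ) (v : Fin n), v ∈ Ed i ↔ i ≤ (v : ℕ) ∧ (v : ℕ) < i + r := by
      intro i v
      rw [hEd]
      simp only [Finset.mem_attachFin, mem_filter, Finset.mem_Ico]
      exact ⟨fun h => h.1, fun h => ⟨h, v.isLt⟩⟩
    have hEdcard : ∀ i : ℕ, i + r ≤ n → (Ed i).card = r := by
      intro i hi
      rw [hEd]
      simp only [Finset.card_attachFin, hfil i hi, Nat.card_Ico]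
      omega
    have hEdinj : ∀ i ∈ Finset.range (k - 1), ∀ j ∈ Finset.range (k - 1),
        Ed i = Ed j → i = j := by
      intro i hi j hj hij
      rw [Finset.mem_range] at hi hj
      have hi' : i + r ≤ n := by omega
      have hj' : j + r ≤ n := by omega
      have h1 : (⟨i, by omega⟩ : Fin n) ∈ Ed i := by
        rw [hEdmem]; simp; omega
      have h2 : (⟨j, by omega⟩ : Fin n) ∈ Ed j := by
        rw [hEdmem]; simp; omega
      rw [hij, hEdmem] at h1
      rw [← hij, hEdmem] at h2
      simp at h1 h2
      omega
    refine ⟨(Finset.range (k - 1)).image Ed, ?_, ?_, ?_⟩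
    · intro e he
      rw [mem_image] at he
      obtain ⟨i, hi, rfl⟩ := he
      rw [Finset.mem_range] at hi
      exact hEdcard i (by omega)
    · apply no_berge_of_card_lt
      rw [card_image_of_injOn hEdinj, card_range]
      omega
    · rw [card_image_of_injOn hEdinj, card_range]
  obtain ⟨H₀, h1, h2, h3⟩ := hcon
  have hmem : (k - 1) ∈ {m | ∃ H : Finset (Finset (Fin n)),
      (∀ e ∈ H, e.card = r) ∧ ¬ IsBergeCopy (matchingG k) H ∧ H.card = m} :=
    ⟨H₀, h1, h2, h3⟩
  have hbd : ∀ m ∈ {m | ∃ H : Finset (Finset (Fin n)),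
      (∀ e ∈ H, e.card = r) ∧ ¬ IsBergeCopy (matchingG k) H ∧ H.card = m}, m ≤ k - 1 := by
    rintro m ⟨H, hu, hf, rfl⟩
    exact berge_upper hk hr2 hr H hu hf
  exact le_antisymm (csSup_le ⟨_, hmem⟩ hbd) (le_csSup ⟨k - 1, hbd⟩ hmem)
end
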